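/- arXiv:2212.09343 — 4 statements merged into one kernel-verified Lean document; each statement's English description precedes it below -/
import Mathlib

section
/- Let H be any orientation of a path or of a cycle with an odd number of edges. Then every antisymmetric kernel U satisfies t(H,U) = 0. -/
open MeasureTheory
open scoped Classical

/-- An oriented graph on a finite vertex type `V`: at most one of `(v,w)`, `(w,v)` is an edge. -/
structure OrientedGraph (V : Type) [Fintype V] where
  edges : Finset (V × V)
  irrefl : ∀ e ∈ edges, e.1 ≠ e.2
  antisymm : ∀ v w : V, (v, w) ∈ edges → (w, v) ∉ edges

/-- The homomorphism density `t(H,U)` of an oriented graph `H` in a kernel `U`. -/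
noncomputable def homDensity {V : Type} [Fintype V] (H : OrientedGraph V)
    (U : ℝ → ℝ → ℝ) : ℝ :=
  ∫ x in Set.univ.pi (fun _ : V => Set.Icc (0 : ℝ) 1),
    ∏ e ∈ H.edges, U (x e.1) (x e.2)

/-- A kernel (bounded measurable) which is antisymmetric on `[0,1]²`. -/
def IsAntisymmetricKernel (U : ℝ → ℝ → ℝ) : Prop :=
  Measurable (Function.uncurry U) ∧
  (∃ M : ℝ, ∀ x ∈ Set.Icc (0 : ℝ) 1, ∀ y ∈ Set.Icc (0 : ℝ) 1, |U x y| ≤ M) ∧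
  (∀ x ∈ Set.Icc (0 : ℝ) 1, ∀ y ∈ Set.Icc (0 : ℝ) 1, U x y = - U y x)

/-- A kernel with values in `[-1/2, 1/2]` on the unit square. -/
def BoundedByHalf (U : ℝ → ℝ → ℝ) : Prop :=
  ∀ x ∈ Set.Icc (0 : ℝ) 1, ∀ y ∈ Set.Icc (0 : ℝ) 1, |U x y| ≤ 1 / 2

/-- A tournamenton. -/
def IsTournamenton (W : ℝ → ℝ → ℝ) : Prop :=
  Measurable (Function.uncurry W) ∧
  (∀ x ∈ Set.Icc (0 : ℝ) 1, ∀ y ∈ Set.Icc (0 : ℝ) 1, 0 ≤ W x y ∧ W x y ≤ 1) ∧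
  (∀ x ∈ Set.Icc (0 : ℝ) 1, ∀ y ∈ Set.Icc (0 : ℝ) 1, W x y + W y x = 1)

/-- Lebesgue measure restricted to the unit square. -/
noncomputable def squareMeasure : Measure (ℝ × ℝ) :=
  MeasureTheory.volume.restrict ((Set.Icc (0 : ℝ) 1) ×ˢ (Set.Icc (0 : ℝ) 1))

/-- An oriented graph `H` is quasirandom-forcing if every tournamenton `W` with
`t(H,W) = 2^{-‖H‖}` equals `1/2` almost everywhere. -/
def QuasirandomForcing {V : Type} [Fintype V] (H : OrientedGraph V) : Prop :=
  ∀ W : ℝ → ℝ → ℝ, IsTournamenton W →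
    homDensity H W = (1 / 2 : ℝ) ^ H.edges.card →
    ∀ᵐ p : ℝ × ℝ ∂squareMeasure, W p.1 p.2 = 1 / 2

/-- `H` is an orientation of the path `0 - 1 - ⋯ - m` (with `m` edges). -/
def IsPathOrientation {m : ℕ} (H : OrientedGraph (Fin (m + 1))) : Prop :=
  (∀ e ∈ H.edges, e.2.val = e.1.val + 1 ∨ e.1.val = e.2.val + 1) ∧
  (∀ i : ℕ, i < m → ∃ e ∈ H.edges,
    (e.1.val = i ∧ e.2.val = i + 1) ∨ (e.2.val = i ∧ e.1.val = i + 1))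

/-- `C` is an orientation of the cycle `0 - 1 - ⋯ - (ℓ-1) - 0` of length `ℓ`. -/
def IsCycleOrientation {ℓ : ℕ} (C : OrientedGraph (Fin ℓ)) : Prop :=
  (∀ e ∈ C.edges, e.2.val = (e.1.val + 1) % ℓ ∨ e.1.val = (e.2.val + 1) % ℓ) ∧
  (∀ i : Fin ℓ, ∃ e ∈ C.edges,
    (e.1 = i ∧ e.2.val = (i.val + 1) % ℓ) ∨ (e.2 = i ∧ e.1.val = (i.val + 1) % ℓ))

/-- `Q_{2k}`: the orientation of the path with `2k` edges in which all edges are oriented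
away from the central vertex `k`; edges are `i+1 → i` for `i < k` and `i → i+1` for `k ≤ i`. -/
noncomputable def pathQ (k : ℕ) : OrientedGraph (Fin (2 * k + 1)) where
  edges := Finset.univ.filter fun e : Fin (2 * k + 1) × Fin (2 * k + 1) =>
    (e.2.val < k ∧ e.1.val = e.2.val + 1) ∨ (k ≤ e.1.val ∧ e.2.val = e.1.val + 1)
  irrefl := by
    intro e he heq
    simp only [Finset.mem_filter, Finset.mem_univ, true_and] at he
    have h : e.1.val = e.2.val := congrArg Fin.val heq
    omega
  antisymm := by
    intro v w hvw hwv
    simp only [Finset.mem_filter, Finset.mem_univ, true_and] at hvw hwv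
    omega

/-- `D_ℓ` (for even `ℓ = 2k`): the orientation of the cycle of length `ℓ` with all edges
oriented from vertex `0` towards vertex `k = ℓ/2`. -/
noncomputable def cycD (ℓ : ℕ) : OrientedGraph (Fin ℓ) where
  edges := Finset.univ.filter fun e : Fin ℓ × Fin ℓ =>
    (e.1.val < ℓ / 2 ∧ e.2.val = e.1.val + 1) ∨
    (ℓ / 2 ≤ e.2.val ∧ e.1.val = e.2.val + 1) ∨
    (2 ≤ ℓ ∧ e.1.val = 0 ∧ e.2.val = ℓ - 1)
  irrefl := by
    intro e he heq
    simp only [Finset.mem_filter, Finset.mem_univ, true_and] at he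
    have h : e.1.val = e.2.val := congrArg Fin.val heq
    have h1 := e.1.isLt
    omega
  antisymm := by
    intro v w hvw hwv
    simp only [Finset.mem_filter, Finset.mem_univ, true_and] at hvw hwv
    have h1 := v.isLt
    have h2 := w.isLt
    omega

/-- The disjoint union `Q_{2 n 0} ∪ ⋯ ∪ Q_{2 n (k-1)}`. -/
noncomputable def QUnion (k : ℕ) (n : Fin k → ℕ) :
    OrientedGraph ((i : Fin k) × Fin (2 * n i + 1)) where
  edges := Finset.univ.filter fun e =>
    e.1.1 = e.2.1 ∧
      ((e.2.2.val < n e.1.1 ∧ e.1.2.val = e.2.2.val + 1) ∨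
       (n e.1.1 ≤ e.1.2.val ∧ e.2.2.val = e.1.2.val + 1))
  irrefl := by
    intro e he heq
    simp only [Finset.mem_filter, Finset.mem_univ, true_and] at he
    have h : e.1.2.val = e.2.2.val := by rw [heq]
    omega
  antisymm := by
    intro v w hvw hwv
    simp only [Finset.mem_filter, Finset.mem_univ, true_and] at hvw hwv
    have h : n v.1 = n w.1 := by rw [hvw.1]
    omega

/-- `F` (a set of edges on the vertex set `W`) can be obtained from the oriented graph `H`
by reversing a set `R` of edges of `H` whose cardinality satisfies `r`, and possibly adding
isolated vertices (the injection `φ` embeds the vertices of `H`). -/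
def ObtainedBy {V W : Type} [Fintype V] [DecidableEq V] [Fintype W] [DecidableEq W]
    (H : OrientedGraph V) (F : Finset (W × W)) (r : ℕ → Prop) : Prop :=
  ∃ φ : V → W, Function.Injective φ ∧
    ∃ R : Finset (V × V), R ⊆ H.edges ∧ r R.card ∧
      F = (H.edges \ R).image (fun e => (φ e.1, φ e.2)) ∪
          R.image (fun e => (φ e.2, φ e.1))

/-- The coefficient `α_C(2 n 0, …, 2 n (k-1))`: the number of edge subsets `F ⊆ E(C)` such
that the spanning subgraph `C⟨F⟩` is obtained from `Q_{2 n 0} ∪ ⋯ ∪ Q_{2 n (k-1)}` by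
reversing an even number of edges and adding isolated vertices, minus the number of those
obtained by reversing an odd number of edges. -/
noncomputable def alphaCoeff {ℓ : ℕ} (C : OrientedGraph (Fin ℓ)) {k : ℕ}
    (n : Fin k → ℕ) : ℤ :=
  ((C.edges.powerset.filter fun F => ObtainedBy (QUnion k n) F Even).card : ℤ) -
  ((C.edges.powerset.filter fun F => ObtainedBy (QUnion k n) F Odd).card : ℤ)

/-- `γ_C`: equal to `1` if `C` can be obtained from `D_ℓ` by reversing an even number of
edges, and `-1` otherwise. -/
noncomputable def gammaCoeff {ℓ : ℕ} (C : OrientedGraph (Fin ℓ)) : ℤ :=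
  if ObtainedBy (cycD ℓ) C.edges Even then 1 else -1

private lemma key_vanish {n : ℕ} (σ : Equiv.Perm (Fin n)) (f : (Fin n → ℝ) → ℝ)
    (hf : ∀ x ∈ (Set.univ.pi fun _ : Fin n => Set.Icc (0:ℝ) 1), f (x ∘ ⇑σ.symm) = - f x) :
    ∫ x in (Set.univ.pi fun _ : Fin n => Set.Icc (0:ℝ) 1), f x = 0 := by
  set S := Set.univ.pi fun _ : Fin n => Set.Icc (0:ℝ) 1 with hS
  have hSm : MeasurableSet S := MeasurableSet.univ_pi fun _ => measurableSet_Icc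
  set E := MeasurableEquiv.piCongrLeft (fun _ : Fin n => ℝ) σ with hE
  have hEapp : ∀ x : Fin n → ℝ, E x = x ∘ ⇑σ.symm := by
    intro x; funext j
    have h := Equiv.piCongrLeft_apply_apply (fun _ : Fin n => ℝ) σ x (σ.symm j)
    rw [Equiv.apply_symm_apply] at h
    calc E x j = (Equiv.piCongrLeft (fun _ : Fin n => ℝ) σ) x j := by
          rw [hE, MeasurableEquiv.coe_piCongrLeft]
      _ = x (σ.symm j) := h
  have hMP : MeasurePreserving E volume volume :=
    volume_measurePreserving_piCongrLeft _ σ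
  have hpre : E ⁻¹' S = S := by
    ext x
    simp only [Set.mem_preimage, hS, Set.mem_pi, Set.mem_univ, forall_true_left, hEapp,
      Function.comp_apply]
    exact ⟨fun h i => by simpa using h (σ i), fun h i => h _⟩
  have h1 : ∫ x in S, f x = ∫ x in S, f (E x) := by
    nth_rewrite 2 [← hpre]
    exact (hMP.setIntegral_preimage_emb E.measurableEmbedding f S).symm
  have h2 : ∫ x in S, f (E x) = ∫ x in S, (- f x) := by
    refine setIntegral_congr_fun hSm fun x hx => ?_
    rw [hEapp]; exact hf x hx
  rw [integral_neg] at h2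
  linarith

private lemma path_integral_zero {m : ℕ} (hm : Odd m) (U : ℝ → ℝ → ℝ)
    (hanti : ∀ x ∈ Set.Icc (0:ℝ) 1, ∀ y ∈ Set.Icc (0:ℝ) 1, U x y = - U y x) :
    ∫ x in (Set.univ.pi fun _ : Fin (m+1) => Set.Icc (0:ℝ) 1),
      ∏ i : Fin m, U (x i.castSucc) (x i.succ) = 0 := by
  apply key_vanish Fin.revPerm
  intro x hx
  simp only [Set.mem_pi, Set.mem_univ, forall_true_left] at hx
  rw [Fin.revPerm_symm]
  calc ∏ i : Fin m, U ((x ∘ ⇑Fin.revPerm) i.castSucc) ((x ∘ ⇑Fin.revPerm) i.succ)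
      = ∏ i : Fin m, U (x i.rev.succ) (x i.rev.castSucc) := by
        refine Finset.prod_congr rfl fun i _ => ?_
        simp only [Function.comp_apply, Fin.revPerm_apply, Fin.rev_castSucc, Fin.rev_succ]
    _ = ∏ i : Fin m, U (x i.succ) (x i.castSucc) := by
        exact Fintype.prod_equiv Fin.revPerm _ _ fun i => rfl
    _ = ∏ i : Fin m, (-1) * U (x i.castSucc) (x i.succ) := by
        refine Finset.prod_congr rfl fun i _ => ?_
        rw [neg_one_mul]; exact hanti _ (hx _) _ (hx _)
    _ = - ∏ i : Fin m, U (x i.castSucc) (x i.succ) := by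
        rw [Finset.prod_mul_distrib, Finset.prod_const, Finset.card_univ, Fintype.card_fin,
          hm.neg_one_pow, neg_one_mul]

private lemma cycle_integral_zero {ℓ : ℕ} [NeZero ℓ] (hl : 3 ≤ ℓ) (hodd : Odd ℓ) (U : ℝ → ℝ → ℝ)
    (hanti : ∀ x ∈ Set.Icc (0:ℝ) 1, ∀ y ∈ Set.Icc (0:ℝ) 1, U x y = - U y x) :
    ∫ x in (Set.univ.pi fun _ : Fin ℓ => Set.Icc (0:ℝ) 1),
      ∏ i : Fin ℓ, U (x i) (x (i + 1)) = 0 := by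
  apply key_vanish (Equiv.neg (Fin ℓ))
  intro x hx
  simp only [Set.mem_pi, Set.mem_univ, forall_true_left] at hx
  have hsymm : ∀ j : Fin ℓ, (Equiv.neg (Fin ℓ)).symm j = -j := fun _ => rfl
  calc ∏ i : Fin ℓ, U ((x ∘ ⇑(Equiv.neg (Fin ℓ)).symm) i) ((x ∘ ⇑(Equiv.neg (Fin ℓ)).symm) (i + 1))
      = ∏ i : Fin ℓ, U (x (-i)) (x (-(i+1))) := by
        refine Finset.prod_congr rfl fun i _ => ?_
        simp only [Function.comp_apply, hsymm]
    _ = ∏ j : Fin ℓ, U (x (j+1)) (x j) := by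
        refine Fintype.prod_equiv ((Equiv.addRight (1 : Fin ℓ)).trans (Equiv.neg (Fin ℓ)))
          _ _ fun j => ?_
        simp only [Equiv.trans_apply, Equiv.coe_addRight, Equiv.neg_apply]
        rw [show -(j+1)+1 = -j from by abel]
    _ = ∏ j : Fin ℓ, (-1) * U (x j) (x (j+1)) := by
        refine Finset.prod_congr rfl fun j _ => ?_
        rw [neg_one_mul]; exact hanti _ (hx _) _ (hx _)
    _ = - ∏ j : Fin ℓ, U (x j) (x (j+1)) := by
        rw [Finset.prod_mul_distrib, Finset.prod_const, Finset.card_univ, Fintype.card_fin,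
          hodd.neg_one_pow, neg_one_mul]

private lemma path_prod_eq {m : ℕ} (H : OrientedGraph (Fin (m+1))) (hH : IsPathOrientation H)
    (U : ℝ → ℝ → ℝ)
    (hanti : ∀ x ∈ Set.Icc (0:ℝ) 1, ∀ y ∈ Set.Icc (0:ℝ) 1, U x y = - U y x)
    (x : Fin (m+1) → ℝ) (hx : ∀ i, x i ∈ Set.Icc (0:ℝ) 1) :
    ∏ e ∈ H.edges, U (x e.1) (x e.2) =
      (∏ i : Fin m, if (i.castSucc, i.succ) ∈ H.edges then (1:ℝ) else -1) *
      ∏ i : Fin m, U (x i.castSucc) (x i.succ) := by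
  rw [← Finset.prod_mul_distrib]
  refine Finset.prod_bij (fun e he => (⟨min e.1.val e.2.val, ?_⟩ : Fin m)) ?_ ?_ ?_ ?_
  · have h := hH.1 e he
    have h1 := e.1.isLt
    have h2 := e.2.isLt
    omega
  · intro e he; exact Finset.mem_univ _
  · intro a ha b hb hab
    have hva : (min a.1.val a.2.val) = (min b.1.val b.2.val) := congrArg Fin.val hab
    have h1 := hH.1 a ha
    have h2 := hH.1 b hb
    by_cases hc : a.1.val = b.1.val
    · have : a.2.val = b.2.val := by omega
      exact Prod.ext (Fin.ext hc) (Fin.ext this)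
    · exfalso
      have h12 : a.1.val = b.2.val ∧ a.2.val = b.1.val := by omega
      have : a = (b.2, b.1) := Prod.ext (Fin.ext h12.1) (Fin.ext h12.2)
      exact H.antisymm b.1 b.2 hb (this ▸ ha)
  · intro b _
    obtain ⟨e, he, hcase⟩ := hH.2 b.val b.isLt
    exact ⟨e, he, Fin.ext (by simp only; omega)⟩
  · intro e he
    have h := hH.1 e he
    have h1 := e.1.isLt
    have h2 := e.2.isLt
    rcases h with h | h
    · have hc1 : ((⟨min e.1.val e.2.val, by omega⟩ : Fin m)).castSucc = e.1 :=
        Fin.ext (by simp; omega)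
      have hc2 : ((⟨min e.1.val e.2.val, by omega⟩ : Fin m)).succ = e.2 :=
        Fin.ext (by simp; omega)
      rw [hc1, hc2, Prod.mk.eta, if_pos he, one_mul]
    · have hc1 : ((⟨min e.1.val e.2.val, by omega⟩ : Fin m)).castSucc = e.2 :=
        Fin.ext (by simp; omega)
      have hc2 : ((⟨min e.1.val e.2.val, by omega⟩ : Fin m)).succ = e.1 :=
        Fin.ext (by simp; omega)
      have hnot : (e.2, e.1) ∉ H.edges := H.antisymm e.1 e.2 he
      rw [hc1, hc2, if_neg hnot, neg_one_mul]
      exact hanti (x e.1) (hx _) (x e.2) (hx _)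

private lemma cycle_prod_eq {ℓ : ℕ} [NeZero ℓ] (hl : 3 ≤ ℓ) (C : OrientedGraph (Fin ℓ))
    (hC : IsCycleOrientation C) (U : ℝ → ℝ → ℝ)
    (hanti : ∀ x ∈ Set.Icc (0:ℝ) 1, ∀ y ∈ Set.Icc (0:ℝ) 1, U x y = - U y x)
    (x : Fin ℓ → ℝ) (hx : ∀ i, x i ∈ Set.Icc (0:ℝ) 1) :
    ∏ e ∈ C.edges, U (x e.1) (x e.2) =
      (∏ i : Fin ℓ, if (i, i + 1) ∈ C.edges then (1:ℝ) else -1) *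
      ∏ i : Fin ℓ, U (x i) (x (i + 1)) := by
  have hval : ∀ i : Fin ℓ, (i + 1).val = (i.val + 1) % ℓ := by
    intro i
    rw [Fin.add_def]
    have h1 : ((1 : Fin ℓ)).val = 1 % ℓ := Fin.val_one' ℓ
    have h2 : 1 % ℓ = 1 := Nat.mod_eq_of_lt (by omega)
    simp [h1, h2]
  rw [← Finset.prod_mul_distrib]
  refine Finset.prod_bij
    (fun e he => if e.2.val = (e.1.val + 1) % ℓ then e.1 else e.2) ?_ ?_ ?_ ?_
  · intro e he; exact Finset.mem_univ _
  · intro a ha b hb hab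
    have h1 := hC.1 a ha
    have h2 := hC.1 b hb
    have ha1 := a.1.isLt; have ha2 := a.2.isLt
    have hb1 := b.1.isLt; have hb2 := b.2.isLt
    by_cases c1 : a.2.val = (a.1.val + 1) % ℓ <;> by_cases c2 : b.2.val = (b.1.val + 1) % ℓ <;>
      simp only [c1, c2, if_true, if_false, if_pos, if_neg] at hab
    · -- a.1 = b.1
      have : a.2.val = b.2.val := by rw [c1, c2, hab]
      exact Prod.ext hab (Fin.ext this)
    · -- a.1 = b.2 ; b.1 = (b.2+1)%ℓ
      exfalso
      have h2' : b.1.val = (b.2.val + 1) % ℓ := by tauto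
      have hv : a.1.val = b.2.val := congrArg Fin.val hab
      have : a = (b.2, b.1) := by
        refine Prod.ext hab (Fin.ext ?_)
        rw [c1, hv, ← h2']
      exact C.antisymm b.1 b.2 hb (this ▸ ha)
    · exfalso
      have h1' : a.1.val = (a.2.val + 1) % ℓ := by tauto
      have hv : a.2.val = b.1.val := congrArg Fin.val hab
      have : b = (a.2, a.1) := by
        refine Prod.ext hab.symm (Fin.ext ?_)
        rw [c2, ← hv, ← h1']
      exact C.antisymm a.1 a.2 ha (this ▸ hb)
    · have h1' : a.1.val = (a.2.val + 1) % ℓ := by tauto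
      have h2' : b.1.val = (b.2.val + 1) % ℓ := by tauto
      have hv : a.2.val = b.2.val := congrArg Fin.val hab
      refine Prod.ext (Fin.ext ?_) hab
      rw [h1', h2', hv]
  · intro i _
    obtain ⟨e, he, hcase⟩ := hC.2 i
    have hii := i.isLt
    have ha1 := e.1.isLt; have ha2 := e.2.isLt
    rcases hcase with ⟨h1, h2⟩ | ⟨h1, h2⟩
    · refine ⟨e, he, ?_⟩
      beta_reduce
      rw [if_pos (by rw [h2, h1]), h1]
    · refine ⟨e, he, ?_⟩
      beta_reduce
      have hne : ¬ e.2.val = (e.1.val + 1) % ℓ := by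
        intro hcon
        rw [h2] at hcon
        have hv : e.2.val = i.val := congrArg Fin.val h1
        rcases Nat.lt_or_ge (i.val + 1) ℓ with hlt | hge
        · rw [Nat.mod_eq_of_lt hlt] at hcon
          rcases Nat.lt_or_ge (i.val + 2) ℓ with h2' | h2''
          · rw [show i.val + 1 + 1 = i.val + 2 from rfl, Nat.mod_eq_of_lt h2'] at hcon
            omega
          · have hh : i.val + 1 + 1 = ℓ := by omega
            rw [hh, Nat.mod_self] at hcon
            omega
        · have hh : i.val + 1 = ℓ := by omega
          rw [hh, Nat.mod_self, Nat.mod_eq_of_lt (show 0 + 1 < ℓ by omega)] at hcon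
          omega
      rw [if_neg hne, h1]
  · intro e he
    have h := hC.1 e he
    have ha1 := e.1.isLt; have ha2 := e.2.isLt
    beta_reduce
    by_cases c1 : e.2.val = (e.1.val + 1) % ℓ
    · rw [if_pos c1]
      have hc2 : e.1 + 1 = e.2 := Fin.ext (by rw [hval, c1])
      rw [hc2, Prod.mk.eta, if_pos he, one_mul]
    · have h1' : e.1.val = (e.2.val + 1) % ℓ := by tauto
      rw [if_neg c1]
      have hc2 : e.2 + 1 = e.1 := Fin.ext (by rw [hval, h1'])
      have hnot : (e.2, e.1) ∉ C.edges := C.antisymm e.1 e.2 he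
      rw [hc2, if_neg hnot, neg_one_mul]
      exact hanti (x e.1) (hx _) (x e.2) (hx _)

/-- any orientation of a path or a cycle with an odd number of edges has
zero density in every antisymmetric kernel. -/
theorem density_odd_path_or_cycle_eq_zero (U : ℝ → ℝ → ℝ)
    (hU : IsAntisymmetricKernel U) :
    (∀ m : ℕ, Odd m → ∀ H : OrientedGraph (Fin (m + 1)), IsPathOrientation H →
      homDensity H U = 0) ∧
    (∀ ℓ : ℕ, 3 ≤ ℓ → Odd ℓ → ∀ C : OrientedGraph (Fin ℓ), IsCycleOrientation C →
      homDensity C U = 0) := by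
  obtain ⟨hmeas, hbound, hanti⟩ := hU
  have hanti' : ∀ x ∈ Set.Icc (0:ℝ) 1, ∀ y ∈ Set.Icc (0:ℝ) 1, U x y = - U y x := hanti
  constructor
  · intro m hm H hH
    rw [homDensity]
    have hSm : MeasurableSet (Set.univ.pi fun _ : Fin (m+1) => Set.Icc (0:ℝ) 1) :=
      MeasurableSet.univ_pi fun _ => measurableSet_Icc
    rw [setIntegral_congr_fun hSm (g := fun x =>
        (∏ i : Fin m, if (i.castSucc, i.succ) ∈ H.edges then (1:ℝ) else -1) *
        ∏ i : Fin m, U (x i.castSucc) (x i.succ)) ?_]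
    · rw [MeasureTheory.integral_const_mul, path_integral_zero hm U hanti', mul_zero]
    · intro x hx
      simp only [Set.mem_pi, Set.mem_univ, forall_true_left] at hx
      exact path_prod_eq H hH U hanti' x hx
  · intro ℓ hl hodd C hC
    haveI : NeZero ℓ := ⟨by omega⟩
    rw [homDensity]
    have hSm : MeasurableSet (Set.univ.pi fun _ : Fin ℓ => Set.Icc (0:ℝ) 1) :=
      MeasurableSet.univ_pi fun _ => measurableSet_Icc
    rw [setIntegral_congr_fun hSm (g := fun x =>
        (∏ i : Fin ℓ, if (i, i + 1) ∈ C.edges then (1:ℝ) else -1) *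
        ∏ i : Fin ℓ, U (x i) (x (i + 1))) ?_]
    · rw [MeasureTheory.integral_const_mul, cycle_integral_zero hl hodd U hanti', mul_zero]
    · intro x hx
      simp only [Set.mem_pi, Set.mem_univ, forall_true_left] at hx
      exact cycle_prod_eq hl C hC U hanti' x hx
end

section
/- Let k ≥ 2 be an integer. Every antisymmetric kernel U satisfies t(D_{2k},U) ≥ 0, and t(D_{2k},U) = 0 holds if and only if U = 0 almost everywhere. -/
open MeasureTheory
open scoped Classical

noncomputable def kmu : Measure ℝ := volume.restrict (Set.Icc 0 1)

instance : IsProbabilityMeasure kmu :=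
  ⟨by simp [kmu, Real.volume_Icc]⟩

lemma kmu_pi_eq (n : ℕ) :
    Measure.pi (fun _ : Fin n => kmu) =
      (volume : Measure (Fin n → ℝ)).restrict (Set.univ.pi fun _ => Set.Icc (0:ℝ) 1) := by
  refine Measure.pi_eq (μ := fun _ : Fin n => kmu) fun s hs => ?_
  rw [Measure.restrict_apply (MeasurableSet.univ_pi hs)]
  rw [← Set.pi_inter_distrib, volume_pi,
    Measure.pi_pi]
  simp [kmu, Measure.restrict_apply, (hs _)]

lemma kmu_ae_pi_mem (n : ℕ) :
    ∀ᵐ x ∂(Measure.pi fun _ : Fin n => kmu), ∀ i, x i ∈ Set.Icc (0:ℝ) 1 := by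
  rw [kmu_pi_eq]
  filter_upwards [ae_restrict_mem (MeasurableSet.univ_pi fun _ => measurableSet_Icc)] with x hx
  exact fun i => hx i (Set.mem_univ i)

lemma integrable_of_bound {α : Type*} [MeasurableSpace α] {ν : Measure α} [IsFiniteMeasure ν]
    {f : α → ℝ} (hm : AEStronglyMeasurable f ν) {C : ℝ} (hb : ∀ᵐ a ∂ν, |f a| ≤ C) :
    Integrable f ν := by
  refine Integrable.mono' (integrable_const C) hm ?_
  simpa [Real.norm_eq_abs] using hb

lemma integral_pi_snoc (n : ℕ) (f : (Fin (n+1) → ℝ) → ℝ)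
    (hf : Integrable f (Measure.pi fun _ : Fin (n+1) => kmu)) :
    ∫ x, f x ∂(Measure.pi fun _ : Fin (n+1) => kmu)
      = ∫ y, (∫ c, f (Fin.snoc y c) ∂kmu) ∂(Measure.pi fun _ : Fin n => kmu) := by
  have hmp := measurePreserving_piFinSuccAbove (fun _ : Fin (n+1) => kmu) (Fin.last n)
  set e := MeasurableEquiv.piFinSuccAbove (fun _ : Fin (n+1) => ℝ) (Fin.last n) with he
  have hsymm : ∀ p : ℝ × (Fin n → ℝ), e.symm p = Fin.snoc p.2 p.1 := by
    intro p
    simp [he, MeasurableEquiv.piFinSuccAbove, Fin.insertNthEquiv, Fin.insertNth_last']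
  have h1 : ∫ x, f x ∂(Measure.pi fun _ : Fin (n+1) => kmu)
      = ∫ p, f (e.symm p) ∂(kmu.prod (Measure.pi fun _ : Fin n => kmu)) := by
    rw [← hmp.integral_comp e.measurableEmbedding (fun p => f (e.symm p))]
    simp
  have hint : Integrable (fun p : ℝ × (Fin n → ℝ) => f (e.symm p))
      (kmu.prod (Measure.pi fun _ : Fin n => kmu)) := by
    have := (hmp.symm e).integrable_comp_emb e.symm.measurableEmbedding (g := f)
    exact this.mpr hf
  rw [h1]
  rw [MeasureTheory.integral_prod _ hint]
  simp_rw [hsymm]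
  rw [integral_integral_swap]
  exact hint.congr (by filter_upwards with p; rcases p with ⟨c, y⟩; rw [hsymm]; simp [Function.uncurry])

lemma kmu_ae_mem : ∀ᵐ c ∂kmu, c ∈ Set.Icc (0:ℝ) 1 :=
  ae_restrict_mem measurableSet_Icc

lemma integral_pi_cons (n : ℕ) (f : (Fin (n+1) → ℝ) → ℝ)
    (hf : Integrable f (Measure.pi fun _ : Fin (n+1) => kmu)) :
    ∫ x, f x ∂(Measure.pi fun _ : Fin (n+1) => kmu)
      = ∫ a, (∫ y, f (Fin.cons a y) ∂(Measure.pi fun _ : Fin n => kmu)) ∂kmu := by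
  have hmp := measurePreserving_piFinSuccAbove (fun _ : Fin (n+1) => kmu) 0
  set e := MeasurableEquiv.piFinSuccAbove (fun _ : Fin (n+1) => ℝ) 0 with he
  have hsymm : ∀ p : ℝ × (Fin n → ℝ), e.symm p = Fin.cons p.1 p.2 := by
    intro p
    simp [he, MeasurableEquiv.piFinSuccAbove, Fin.insertNthEquiv, Fin.insertNth_zero']
  have h1 : ∫ x, f x ∂(Measure.pi fun _ : Fin (n+1) => kmu)
      = ∫ p, f (e.symm p) ∂(kmu.prod (Measure.pi fun _ : Fin n => kmu)) := by
    rw [← hmp.integral_comp e.measurableEmbedding (fun p => f (e.symm p))]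
    simp
  have hint : Integrable (fun p : ℝ × (Fin n → ℝ) => f (e.symm p))
      (kmu.prod (Measure.pi fun _ : Fin n => kmu)) := by
    have := (hmp.symm e).integrable_comp_emb e.symm.measurableEmbedding (g := f)
    exact this.mpr hf
  rw [h1, MeasureTheory.integral_prod _ hint]
  simp_rw [hsymm]

lemma integral_pi_zero (f : (Fin 0 → ℝ) → ℝ) :
    ∫ x, f x ∂(Measure.pi fun _ : Fin 0 => kmu) = f (fun i => i.elim0) := by
  have : (fun x : Fin 0 → ℝ => f x) = fun _ => f (fun i => i.elim0) := by
    funext x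
    congr 1
    funext i
    exact i.elim0
  rw [this, integral_const]
  simp

lemma integral_pi_castn {n n' : ℕ} (h : n = n') (f : (Fin n' → ℝ) → ℝ) :
    ∫ x, f x ∂(Measure.pi fun _ : Fin n' => kmu)
      = ∫ x, f (fun i => x (Fin.cast h.symm i)) ∂(Measure.pi fun _ : Fin n => kmu) := by
  cases h
  simp

lemma ae_prod_mk {α β : Type*} [MeasurableSpace α] [MeasurableSpace β]
    {μ : Measure α} {ν : Measure β} [SigmaFinite ν]
    {P : α → Prop} {Q : β → Prop} (hP : ∀ᵐ x ∂μ, P x) (hQ : ∀ᵐ y ∂ν, Q y) :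
    ∀ᵐ p ∂μ.prod ν, P p.1 ∧ Q p.2 := by
  rw [ae_iff] at hP hQ ⊢
  have hsub : {p : α × β | ¬(P p.1 ∧ Q p.2)} ⊆
      ({x | ¬ P x} ×ˢ (Set.univ : Set β)) ∪ ((Set.univ : Set α) ×ˢ {y | ¬ Q y}) := by
    intro p hp
    by_cases h1 : P p.1
    · exact Or.inr ⟨Set.mem_univ _, fun h2 => hp ⟨h1, h2⟩⟩
    · exact Or.inl ⟨h1, Set.mem_univ _⟩
  refine measure_mono_null hsub (measure_union_null ?_ ?_)
  · rw [Measure.prod_prod, hP, zero_mul]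
  · rw [Measure.prod_prod, hQ, mul_zero]

noncomputable def iterK (U : ℝ → ℝ → ℝ) : ℕ → ℝ → ℝ → ℝ
  | 0 => U
  | (n+1) => fun a b => ∫ c, iterK U n a c * U c b ∂kmu

def pathFn (U : ℝ → ℝ → ℝ) : (n : ℕ) → ℝ → (Fin n → ℝ) → ℝ → ℝ
  | 0, a, _z, b => U a b
  | (n+1), a, z, b =>
      pathFn U n a (fun i => z i.castSucc) (z (Fin.last n)) * U (z (Fin.last n)) b

section kernel

variable {U : ℝ → ℝ → ℝ} {B : ℝ}

lemma iterK_meas (hU : Measurable (Function.uncurry U)) (n : ℕ) :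
    Measurable (Function.uncurry (iterK U n)) := by
  induction n with
  | zero => exact hU
  | succ n ih =>
    have heq : Function.uncurry (iterK U (n+1))
        = fun p : ℝ × ℝ => ∫ c, iterK U n p.1 c * U c p.2 ∂kmu := rfl
    rw [heq]
    refine (MeasureTheory.StronglyMeasurable.integral_prod_right
      (f := fun (p : ℝ × ℝ) (c : ℝ) => iterK U n p.1 c * U c p.2) ?_).measurable
    refine Measurable.stronglyMeasurable ?_
    exact (ih.comp (measurable_fst.fst.prodMk measurable_snd)).mul
      (hU.comp (measurable_snd.prodMk measurable_fst.snd))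

lemma pathFn_meas (hU : Measurable (Function.uncurry U)) (n : ℕ) :
    Measurable (fun q : (ℝ × ℝ) × (Fin n → ℝ) => pathFn U n q.1.1 q.2 q.1.2) := by
  induction n with
  | zero => exact hU.comp (measurable_fst.fst.prodMk measurable_fst.snd)
  | succ n ih =>
    have heq : (fun q : (ℝ × ℝ) × (Fin (n+1) → ℝ) => pathFn U (n+1) q.1.1 q.2 q.1.2)
        = fun q => (fun q' : (ℝ × ℝ) × (Fin n → ℝ) => pathFn U n q'.1.1 q'.2 q'.1.2)
            ((q.1.1, q.2 (Fin.last n)), fun i => q.2 i.castSucc)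
          * U (q.2 (Fin.last n)) q.1.2 := rfl
    rw [heq]
    have hm1 : Measurable fun q : (ℝ × ℝ) × (Fin (n+1) → ℝ) =>
        ((q.1.1, q.2 (Fin.last n)), fun i : Fin n => q.2 i.castSucc) := by
      refine Measurable.prodMk (Measurable.prodMk measurable_fst.fst
        ((measurable_pi_apply _).comp measurable_snd)) ?_
      exact measurable_pi_lambda _ fun i => (measurable_pi_apply _).comp measurable_snd
    have hm2 : Measurable fun q : (ℝ × ℝ) × (Fin (n+1) → ℝ) => (q.2 (Fin.last n), q.1.2) :=
      ((measurable_pi_apply _).comp measurable_snd).prodMk measurable_fst.snd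
    exact (ih.comp hm1).mul (hU.comp hm2)

variable (hB : 1 ≤ B)
variable (hUb : ∀ x ∈ Set.Icc (0:ℝ) 1, ∀ y ∈ Set.Icc (0:ℝ) 1, |U x y| ≤ B)

include hB hUb in
lemma pathFn_bound : ∀ n (a : ℝ), a ∈ Set.Icc (0:ℝ) 1 → ∀ (z : Fin n → ℝ),
    (∀ i, z i ∈ Set.Icc (0:ℝ) 1) → ∀ b ∈ Set.Icc (0:ℝ) 1,
    |pathFn U n a z b| ≤ B ^ (n+1) := by
  intro n
  induction n with
  | zero =>
    intro a ha z hz b hb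
    simpa [pathFn] using hUb a ha b hb
  | succ n ih =>
    intro a ha z hz b hb
    have h1 := ih a ha (fun i => z i.castSucc) (fun i => hz _) (z (Fin.last n)) (hz _)
    have h2 := hUb (z (Fin.last n)) (hz _) b hb
    calc |pathFn U (n+1) a z b|
        = |pathFn U n a (fun i => z i.castSucc) (z (Fin.last n))| * |U (z (Fin.last n)) b| := by
          rw [← abs_mul]; rfl
      _ ≤ B ^ (n+1) * B := by
          apply mul_le_mul h1 h2 (abs_nonneg _)
          positivity
      _ = B ^ (n+2) := by ring

include hB hUb in
lemma iterK_bound : ∀ n, ∀ a ∈ Set.Icc (0:ℝ) 1, ∀ b ∈ Set.Icc (0:ℝ) 1,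
    |iterK U n a b| ≤ B ^ (n+1) := by
  intro n
  induction n with
  | zero => intro a ha b hb; simpa [iterK] using hUb a ha b hb
  | succ n ih =>
    intro a ha b hb
    have : ‖∫ c, iterK U n a c * U c b ∂kmu‖ ≤ B ^ (n+1) * B := by
      have hbd : ∀ᵐ c ∂kmu, ‖iterK U n a c * U c b‖ ≤ B ^ (n+1) * B := by
        filter_upwards [kmu_ae_mem] with c hc
        rw [norm_mul]
        exact mul_le_mul (ih a ha c hc) (hUb c hc b hb) (norm_nonneg _) (by positivity)
      calc ‖∫ c, iterK U n a c * U c b ∂kmu‖ ≤ B ^ (n+1) * B * (kmu Set.univ).toReal :=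
            norm_integral_le_of_norm_le_const hbd
        _ = B ^ (n+1) * B := by simp
    calc |iterK U (n+1) a b| = ‖∫ c, iterK U n a c * U c b ∂kmu‖ := rfl
      _ ≤ B ^ (n+1) * B := this
      _ = B ^ (n+2) := by ring

include hB hUb in
lemma pathFn_integral (hU : Measurable (Function.uncurry U)) :
    ∀ n, ∀ a ∈ Set.Icc (0:ℝ) 1, ∀ b ∈ Set.Icc (0:ℝ) 1,
    ∫ z, pathFn U n a z b ∂(Measure.pi fun _ : Fin n => kmu) = iterK U n a b := by
  intro n
  induction n with
  | zero =>
    intro a ha b hb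
    rw [integral_pi_zero (fun z => pathFn U 0 a z b)]
    rfl
  | succ n ih =>
    intro a ha b hb
    have hmc : Measurable fun z : Fin (n+1) → ℝ => (((a, b) : ℝ × ℝ), z) :=
      measurable_const.prodMk measurable_id
    have hmeas : Measurable (fun z : Fin (n+1) → ℝ => pathFn U (n+1) a z b) :=
      (pathFn_meas hU (n+1)).comp hmc
    have hint : Integrable (fun z : Fin (n+1) → ℝ => pathFn U (n+1) a z b)
        (Measure.pi fun _ : Fin (n+1) => kmu) := by
      refine integrable_of_bound hmeas.aestronglyMeasurable (C := B ^ (n+2)) ?_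
      filter_upwards [kmu_ae_pi_mem (n+1)] with z hz
      exact pathFn_bound hB hUb (n+1) a ha z hz b hb
    rw [integral_pi_snoc _ _ hint]
    have hps : ∀ (y : Fin n → ℝ) (c : ℝ),
        pathFn U (n+1) a (Fin.snoc y c) b = pathFn U n a y c * U c b := by
      intro y c
      have hdef : pathFn U (n+1) a (Fin.snoc y c) b
          = pathFn U n a (fun i => (Fin.snoc y c : Fin (n+1) → ℝ) i.castSucc)
              ((Fin.snoc y c : Fin (n+1) → ℝ) (Fin.last n))
            * U ((Fin.snoc y c : Fin (n+1) → ℝ) (Fin.last n)) b := rfl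
      rw [hdef]
      have h1 : (fun i : Fin n => (Fin.snoc y c : Fin (n+1) → ℝ) i.castSucc) = y := by
        funext i; simp
      rw [h1, Fin.snoc_last]
    simp_rw [hps]
    have hswap : Integrable (Function.uncurry fun (y : Fin n → ℝ) (c : ℝ) =>
        pathFn U n a y c * U c b) ((Measure.pi fun _ : Fin n => kmu).prod kmu) := by
      have hm : Measurable (Function.uncurry fun (y : Fin n → ℝ) (c : ℝ) =>
          pathFn U n a y c * U c b) := by
        refine Measurable.mul ?_ ?_
        · have hmc2 : Measurable fun p : (Fin n → ℝ) × ℝ => (((a : ℝ), p.2), p.1) :=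
            (measurable_const.prodMk measurable_snd).prodMk measurable_fst
          exact (pathFn_meas hU n).comp hmc2
        · have hmc3 : Measurable fun p : (Fin n → ℝ) × ℝ => (p.2, b) :=
            measurable_snd.prodMk measurable_const
          exact hU.comp hmc3
      refine integrable_of_bound hm.aestronglyMeasurable (C := B ^ (n+1) * B) ?_
      filter_upwards [ae_prod_mk (kmu_ae_pi_mem n) kmu_ae_mem] with p hp
      rw [Function.uncurry, abs_mul]
      exact mul_le_mul (pathFn_bound hB hUb n a ha p.1 hp.1 p.2 hp.2)
        (hUb p.2 hp.2 b hb) (abs_nonneg _) (by positivity)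
    rw [integral_integral_swap hswap]
    have h2 : ∀ c : ℝ, ∫ y, pathFn U n a y c * U c b ∂(Measure.pi fun _ : Fin n => kmu)
        = (∫ y, pathFn U n a y c ∂(Measure.pi fun _ : Fin n => kmu)) * U c b := fun c =>
      integral_mul_const _ _
    simp_rw [h2]
    have h3 : ∫ c, (∫ y, pathFn U n a y c ∂(Measure.pi fun _ : Fin n => kmu)) * U c b ∂kmu
        = ∫ c, iterK U n a c * U c b ∂kmu := by
      refine integral_congr_ae ?_
      filter_upwards [kmu_ae_mem] with c hc
      rw [ih a ha c hc]
    rw [h3]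
    rfl

end kernel
def extv {n : ℕ} (x : Fin n → ℝ) (j : ℕ) : ℝ := if h : j < n then x ⟨j, h⟩ else 0

lemma extv_lt {n : ℕ} (x : Fin n → ℝ) {j : ℕ} (h : j < n) : extv x j = x ⟨j, h⟩ := dif_pos h

lemma extv_snoc_lt {n : ℕ} (y : Fin n → ℝ) (c : ℝ) {j : ℕ} (h : j < n) :
    extv (Fin.snoc y c : Fin (n+1) → ℝ) j = extv y j := by
  have h' : j < n + 1 := Nat.lt_succ_of_lt h
  rw [extv_lt _ h', extv_lt _ h]
  have : (⟨j, h'⟩ : Fin (n+1)) = Fin.castSucc ⟨j, h⟩ := rfl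
  rw [this, Fin.snoc_castSucc]

lemma extv_snoc_last {n : ℕ} (y : Fin n → ℝ) (c : ℝ) :
    extv (Fin.snoc y c : Fin (n+1) → ℝ) n = c := by
  rw [extv_lt _ (Nat.lt_succ_self n)]
  have : (⟨n, Nat.lt_succ_self n⟩ : Fin (n+1)) = Fin.last n := rfl
  rw [this, Fin.snoc_last]

lemma prod_consec (U : ℝ → ℝ → ℝ) :
    ∀ (n : ℕ) (v : ℕ → ℝ) (s : ℕ),
    (∏ i : Fin (n+1), U (v (s + i)) (v (s + i + 1)))
      = pathFn U n (v s) (fun i : Fin n => v (s + i + 1)) (v (s + n + 1)) := by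
  intro n
  induction n with
  | zero => intro v s; simp [pathFn]
  | succ n ih =>
    intro v s
    rw [Fin.prod_univ_castSucc]
    have h1 : ∀ i : Fin (n+1), (((i.castSucc : Fin (n+2)) : ℕ)) = (i : ℕ) := fun i => rfl
    have h2 : (∏ i : Fin (n+1), U (v (s + i.castSucc)) (v (s + i.castSucc + 1)))
        = pathFn U n (v s) (fun i : Fin n => v (s + i + 1)) (v (s + n + 1)) := by
      simp_rw [h1]
      exact ih v s
    rw [h2]
    have h7 : s + ((Fin.last (n+1) : Fin (n+2)) : ℕ) = s + n + 1 := by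
      rw [Fin.val_last]; omega
    rw [h7]
    have hdef : pathFn U (n+1) (v s) (fun i : Fin (n+1) => v (s + i + 1)) (v (s + (n+1) + 1))
        = pathFn U n (v s) (fun i : Fin n => v (s + i + 1)) (v (s + n + 1))
          * U (v (s + n + 1)) (v (s + (n+1) + 1)) := rfl
    rw [hdef]
    rw [show s + (n+1) + 1 = s + n + 1 + 1 from by omega]

def edgeMap (k : ℕ) (hk : 2 ≤ k) : (Fin k ⊕ Fin (k-1)) ⊕ Fin 1 → Fin (2*k) × Fin (2*k)
  | .inl (.inl i) => (⟨i.1, by have := i.2; omega⟩, ⟨i.1+1, by have := i.2; omega⟩)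
  | .inl (.inr t) => (⟨k+t.1+1, by have := t.2; omega⟩, ⟨k+t.1, by have := t.2; omega⟩)
  | .inr _ => (⟨0, by omega⟩, ⟨2*k-1, by omega⟩)

lemma edgeMap_inj (k : ℕ) (hk : 2 ≤ k) : Function.Injective (edgeMap k hk) := by
  intro s1 s2 h
  rcases s1 with (i1|t1)|o1 <;> rcases s2 with (i2|t2)|o2 <;>
    simp only [edgeMap, Prod.mk.injEq, Fin.mk.injEq] at h
  · have := i1.2; have := i2.2
    exact congrArg (Sum.inl ∘ Sum.inl) (Fin.ext h.1)
  · have := i1.2; have := t2.2; omega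
  · have := i1.2; omega
  · have := t1.2; have := i2.2; omega
  · exact congrArg (Sum.inl ∘ Sum.inr) (Fin.ext (by omega))
  · have := t1.2; omega
  · have := i2.2; omega
  · have := t2.2; omega
  · exact congrArg Sum.inr (Subsingleton.elim _ _)

lemma cycD_edges (k : ℕ) (hk : 2 ≤ k) :
    (cycD (2*k)).edges = Finset.image (edgeMap k hk) Finset.univ := by
  have hhalf : 2*k/2 = k := by omega
  ext e
  simp only [cycD, Finset.mem_filter, Finset.mem_univ, true_and, Finset.mem_image, hhalf]
  constructor
  · intro he
    have he1 := e.1.2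
    have he2 := e.2.2
    rcases he with ⟨h1, h2⟩ | ⟨h1, h2⟩ | ⟨-, h1, h2⟩
    · refine ⟨.inl (.inl ⟨e.1.1, h1⟩), ?_⟩
      simp only [edgeMap]
      refine Prod.ext (Fin.ext ?_) (Fin.ext ?_) <;> simp <;> omega
    · refine ⟨.inl (.inr ⟨e.2.1 - k, by omega⟩), ?_⟩
      simp only [edgeMap]
      refine Prod.ext (Fin.ext ?_) (Fin.ext ?_) <;> simp <;> omega
    · refine ⟨.inr 0, ?_⟩
      simp only [edgeMap]
      refine Prod.ext (Fin.ext ?_) (Fin.ext ?_) <;> simp <;> omega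
  · rintro ⟨s, rfl⟩
    rcases s with (i|t)|o
    · refine Or.inl ⟨?_, ?_⟩ <;> simp [edgeMap]
    · refine Or.inr (Or.inl ⟨?_, ?_⟩) <;> simp [edgeMap]
    · refine Or.inr (Or.inr ⟨?_, ?_, ?_⟩) <;> simp [edgeMap] <;> omega

lemma extv_cons_zero {n : ℕ} (a : ℝ) (y : Fin n → ℝ) :
    extv (Fin.cons a y : Fin (n+1) → ℝ) 0 = a := by
  rw [extv_lt _ (Nat.succ_pos n)]
  simp

lemma extv_cons_succ {n : ℕ} (a : ℝ) (y : Fin n → ℝ) {v : ℕ} (h : v < n) :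
    extv (Fin.cons a y : Fin (n+1) → ℝ) (v+1) = extv y v := by
  rw [extv_lt _ (by omega : v + 1 < n + 1), extv_lt _ h]
  have : (⟨v+1, by omega⟩ : Fin (n+1)) = Fin.succ ⟨v, h⟩ := rfl
  rw [this, Fin.cons_succ]

lemma extv_mem {n : ℕ} {x : Fin n → ℝ} (hx : ∀ i, x i ∈ Set.Icc (0:ℝ) 1) (v : ℕ) :
    extv x v ∈ Set.Icc (0:ℝ) 1 := by
  unfold extv
  split_ifs
  · exact hx _
  · exact Set.mem_Icc.mpr ⟨le_refl 0, zero_le_one⟩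

lemma measurable_extv {n : ℕ} (v : ℕ) : Measurable fun x : Fin n → ℝ => extv x v := by
  unfold extv
  split_ifs
  · exact measurable_pi_apply _
  · exact measurable_const

noncomputable def phaseG (U : ℝ → ℝ → ℝ) (j m r : ℕ) (x : Fin (m+1) → ℝ) : ℝ :=
  pathFn U (j+1) (extv x 0) (fun i : Fin (j+1) => extv x (i.1+1)) (extv x (j+2))
    * ((∏ t : Fin r, U (extv x (j+2+t.1+1)) (extv x (j+2+t.1)))
        * iterK U (2*j+3-m) (extv x 0) (extv x m))

section phase

variable {U : ℝ → ℝ → ℝ} {B : ℝ}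
variable (hU : Measurable (Function.uncurry U))
variable (hB : 1 ≤ B)
variable (hUb : ∀ x ∈ Set.Icc (0:ℝ) 1, ∀ y ∈ Set.Icc (0:ℝ) 1, |U x y| ≤ B)

include hU in
lemma phaseG_meas (j m r : ℕ) : Measurable (phaseG U j m r) := by
  unfold phaseG
  have h1 : Measurable fun x : Fin (m+1) → ℝ =>
      pathFn U (j+1) (extv x 0) (fun i : Fin (j+1) => extv x (i.1+1)) (extv x (j+2)) := by
    have hmc : Measurable fun x : Fin (m+1) → ℝ =>
        (((extv x 0, extv x (j+2)) : ℝ × ℝ), fun i : Fin (j+1) => extv x (i.1+1)) := by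
      refine Measurable.prodMk ((measurable_extv 0).prodMk (measurable_extv (j+2))) ?_
      exact measurable_pi_lambda _ fun i => measurable_extv _
    exact (pathFn_meas hU (j+1)).comp hmc
  have h2 : Measurable fun x : Fin (m+1) → ℝ =>
      ∏ t : Fin r, U (extv x (j+2+t.1+1)) (extv x (j+2+t.1)) := by
    refine Finset.measurable_prod _ fun t _ => ?_
    have hmc : Measurable fun x : Fin (m+1) → ℝ => (extv x (j+2+t.1+1), extv x (j+2+t.1)) :=
      (measurable_extv _).prodMk (measurable_extv _)
    exact hU.comp hmc
  have h3 : Measurable fun x : Fin (m+1) → ℝ =>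
      iterK U (2*j+3-m) (extv x 0) (extv x m) := by
    have hmc : Measurable fun x : Fin (m+1) → ℝ => (extv x 0, extv x m) :=
      (measurable_extv _).prodMk (measurable_extv _)
    exact (iterK_meas hU _).comp hmc
  exact h1.mul (h2.mul h3)

include hB hUb in
lemma phaseG_bound (j m r : ℕ) (x : Fin (m+1) → ℝ) (hx : ∀ i, x i ∈ Set.Icc (0:ℝ) 1) :
    |phaseG U j m r x| ≤ B ^ (j+2) * (B ^ r * B ^ (2*j+3-m+1)) := by
  unfold phaseG
  rw [abs_mul, abs_mul]
  have hp : |pathFn U (j+1) (extv x 0) (fun i : Fin (j+1) => extv x (i.1+1)) (extv x (j+2))|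
      ≤ B ^ (j+2) :=
    pathFn_bound hB hUb (j+1) _ (extv_mem hx 0) _ (fun i => extv_mem hx _) _ (extv_mem hx _)
  have hq : |∏ t : Fin r, U (extv x (j+2+t.1+1)) (extv x (j+2+t.1))| ≤ B ^ r := by
    rw [Finset.abs_prod]
    calc ∏ t : Fin r, |U (extv x (j+2+t.1+1)) (extv x (j+2+t.1))|
        ≤ ∏ _t : Fin r, B :=
          Finset.prod_le_prod (fun t _ => abs_nonneg _)
            (fun t _ => hUb _ (extv_mem hx _) _ (extv_mem hx _))
      _ = B ^ r := by simp
  have hi : |iterK U (2*j+3-m) (extv x 0) (extv x m)| ≤ B ^ (2*j+3-m+1) :=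
    iterK_bound hB hUb _ _ (extv_mem hx 0) _ (extv_mem hx m)
  have hB0 : (0:ℝ) ≤ B := le_trans zero_le_one hB
  refine mul_le_mul hp ?_ (mul_nonneg (abs_nonneg _) (abs_nonneg _)) (by positivity)
  exact mul_le_mul hq hi (abs_nonneg _) (by positivity)

include hU hB hUb in
lemma phaseG_integrable (j m r : ℕ) :
    Integrable (phaseG U j m r) (Measure.pi fun _ : Fin (m+1) => kmu) := by
  refine integrable_of_bound (phaseG_meas hU j m r).aestronglyMeasurable
      (C := B ^ (j+2) * (B ^ r * B ^ (2*j+3-m+1))) ?_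
  filter_upwards [kmu_ae_pi_mem (m+1)] with x hx
  exact phaseG_bound hB hUb j m r x hx

end phase

section phase2

variable {U : ℝ → ℝ → ℝ} {B : ℝ}
variable (hU : Measurable (Function.uncurry U))
variable (hB : 1 ≤ B)
variable (hUb : ∀ x ∈ Set.Icc (0:ℝ) 1, ∀ y ∈ Set.Icc (0:ℝ) 1, |U x y| ≤ B)

include hU hB hUb in
lemma phase_step (j m r : ℕ) (hm : m = j+2+r) (hle : m+1 ≤ 2*j+3) :
    ∫ x, phaseG U j (m+1) (r+1) x ∂(Measure.pi fun _ : Fin (m+2) => kmu)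
      = ∫ x, phaseG U j m r x ∂(Measure.pi fun _ : Fin (m+1) => kmu) := by
  rw [integral_pi_snoc (m+1) _ (phaseG_integrable hU hB hUb j (m+1) (r+1))]
  refine integral_congr_ae (Filter.Eventually.of_forall fun y => ?_)
  have hsp : ∀ c : ℝ, phaseG U j (m+1) (r+1) (Fin.snoc y c)
      = (pathFn U (j+1) (extv y 0) (fun i : Fin (j+1) => extv y (i.1+1)) (extv y (j+2))
          * (∏ t : Fin r, U (extv y (j+2+t.1+1)) (extv y (j+2+t.1))))
        * (iterK U (2*j+3-(m+1)) (extv y 0) c * U c (extv y m)) := by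
    intro c
    unfold phaseG
    rw [Fin.prod_univ_castSucc]
    simp only [Fin.coe_castSucc, Fin.val_last]
    rw [show j+2+r = m from by omega]
    rw [extv_snoc_lt y c (show (0:ℕ) < m+1 by omega),
        extv_snoc_lt y c (show j+2 < m+1 by omega),
        extv_snoc_last y c,
        extv_snoc_lt y c (show m < m+1 by omega)]
    have hmid : (fun i : Fin (j+1) => extv (Fin.snoc y c : Fin (m+2) → ℝ) (i.1+1))
        = fun i : Fin (j+1) => extv y (i.1+1) := by
      funext i
      exact extv_snoc_lt y c (by have := i.2; omega)
    rw [hmid]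
    have hcs : (∏ t : Fin r, U (extv (Fin.snoc y c : Fin (m+2) → ℝ) (j+2+t.1+1))
          (extv (Fin.snoc y c : Fin (m+2) → ℝ) (j+2+t.1)))
        = ∏ t : Fin r, U (extv y (j+2+t.1+1)) (extv y (j+2+t.1)) := by
      refine Finset.prod_congr rfl fun t _ => ?_
      rw [extv_snoc_lt y c (by have := t.2; omega),
          extv_snoc_lt y c (by have := t.2; omega)]
    rw [hcs]
    ring
  simp_rw [hsp]
  rw [integral_const_mul]
  rw [show (∫ c, iterK U (2*j+3-(m+1)) (extv y 0) c * U c (extv y m) ∂kmu)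
      = iterK U (2*j+3-(m+1)+1) (extv y 0) (extv y m) from rfl]
  rw [show 2*j+3-(m+1)+1 = 2*j+3-m from by omega]
  unfold phaseG
  ring

end phase2

lemma extv_cons' {n : ℕ} (a : ℝ) (y : Fin n → ℝ) {v w : ℕ} (h : v < n) (hw : w = v+1) :
    extv (Fin.cons a y : Fin (n+1) → ℝ) w = extv y v := by
  subst hw; exact extv_cons_succ a y h

section mainid

variable {U : ℝ → ℝ → ℝ} {B : ℝ}
variable (hU : Measurable (Function.uncurry U))
variable (hB : 1 ≤ B)
variable (hUb : ∀ x ∈ Set.Icc (0:ℝ) 1, ∀ y ∈ Set.Icc (0:ℝ) 1, |U x y| ≤ B)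

include hU hB hUb in
lemma phase_chain (j : ℕ) : ∀ r m, m = j+2+r → m ≤ 2*j+3 →
    ∫ x, phaseG U j m r x ∂(Measure.pi fun _ : Fin (m+1) => kmu)
      = ∫ x, phaseG U j (j+2) 0 x ∂(Measure.pi fun _ : Fin (j+3) => kmu) := by
  intro r
  induction r with
  | zero => intro m hm _; subst hm; rfl
  | succ r ih =>
    intro m hm hle; subst hm
    have h1 := phase_step hU hB hUb j (j+2+r) r rfl (by omega)
    exact h1.trans (ih (j+2+r) rfl (by omega))

lemma prod_edges_eval (U : ℝ → ℝ → ℝ) (j : ℕ) (x : Fin (2*(j+2)) → ℝ) :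
    (∏ e ∈ (cycD (2*(j+2))).edges, U (x e.1) (x e.2)) = phaseG U j (2*j+3) (j+1) x := by
  have hx : ∀ (v : ℕ) (h : v < 2*(j+2)), x ⟨v, h⟩ = extv x v := fun v h => (extv_lt x h).symm
  rw [cycD_edges (j+2) (by omega),
    Finset.prod_image (fun a _ b _ h => edgeMap_inj (j+2) (by omega) h),
    Fintype.prod_sum_type, Fintype.prod_sum_type]
  simp only [edgeMap, hx, Fin.prod_univ_one]
  unfold phaseG
  rw [Nat.sub_self]
  have hfwd := prod_consec U (j+1) (extv x) 0
  rw [show 0+(j+1)+1 = j+2 from by omega] at hfwd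
  simp only [Nat.zero_add] at hfwd
  rw [hfwd]
  rw [show 2*(j+2)-1 = 2*j+3 from by omega]
  rw [mul_assoc]
  rfl

include hU hB hUb in
lemma phase_final (j : ℕ) :
    ∫ x, phaseG U j (j+2) 0 x ∂(Measure.pi fun _ : Fin (j+3) => kmu)
      = ∫ a, (∫ b, (iterK U (j+1) a b)^2 ∂kmu) ∂kmu := by
  have hsimp : ∀ x : Fin (j+3) → ℝ, phaseG U j (j+2) 0 x
      = pathFn U (j+1) (extv x 0) (fun i : Fin (j+1) => extv x (i.1+1)) (extv x (j+2))
        * iterK U (j+1) (extv x 0) (extv x (j+2)) := by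
    intro x
    unfold phaseG
    rw [show 2*j+3-(j+2) = j+1 from by omega]
    simp
  have hint1 : Integrable (fun x : Fin (j+3) → ℝ => phaseG U j (j+2) 0 x)
      (Measure.pi fun _ : Fin (j+3) => kmu) := phaseG_integrable hU hB hUb j (j+2) 0
  rw [integral_pi_cons (j+2) _ hint1]
  refine integral_congr_ae ?_
  filter_upwards [kmu_ae_mem] with a ha
  have hg : ∀ y : Fin (j+2) → ℝ, phaseG U j (j+2) 0 (Fin.cons a y)
      = pathFn U (j+1) a (fun i : Fin (j+1) => extv y i.1) (extv y (j+1))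
        * iterK U (j+1) a (extv y (j+1)) := by
    intro y
    rw [hsimp]
    have hmid : (fun i : Fin (j+1) => extv (Fin.cons a y : Fin (j+3) → ℝ) (i.1+1))
        = fun i : Fin (j+1) => extv y i.1 :=
      funext fun i => extv_cons' a y (by have := i.2; omega) rfl
    rw [hmid, extv_cons_zero, extv_cons' a y (show j+1 < j+2 by omega) (by omega)]
  rw [integral_congr_ae (Filter.Eventually.of_forall hg)]
  have hmeas2 : Measurable (fun y : Fin (j+2) → ℝ =>
      pathFn U (j+1) a (fun i : Fin (j+1) => extv y i.1) (extv y (j+1))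
        * iterK U (j+1) a (extv y (j+1))) := by
    have hmc : Measurable fun y : Fin (j+2) → ℝ =>
        (((a, extv y (j+1)) : ℝ × ℝ), fun i : Fin (j+1) => extv y i.1) := by
      refine Measurable.prodMk (measurable_const.prodMk (measurable_extv _)) ?_
      exact measurable_pi_lambda _ fun i => measurable_extv _
    have hmc2 : Measurable fun y : Fin (j+2) → ℝ => ((a : ℝ), extv y (j+1)) :=
      measurable_const.prodMk (measurable_extv _)
    exact ((pathFn_meas hU (j+1)).comp hmc).mul ((iterK_meas hU (j+1)).comp hmc2)
  have hint2 : Integrable (fun y : Fin (j+2) → ℝ =>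
      pathFn U (j+1) a (fun i : Fin (j+1) => extv y i.1) (extv y (j+1))
        * iterK U (j+1) a (extv y (j+1))) (Measure.pi fun _ : Fin (j+2) => kmu) := by
    refine integrable_of_bound hmeas2.aestronglyMeasurable (C := B^(j+2) * B^(j+2)) ?_
    filter_upwards [kmu_ae_pi_mem (j+2)] with y hy
    rw [abs_mul]
    exact mul_le_mul
      (pathFn_bound hB hUb (j+1) a ha _ (fun i => extv_mem hy _) _ (extv_mem hy _))
      (iterK_bound hB hUb (j+1) a ha _ (extv_mem hy _)) (abs_nonneg _) (by positivity)
  rw [integral_pi_snoc (j+1) _ hint2]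
  have hsn : ∀ (u : Fin (j+1) → ℝ) (b : ℝ),
      pathFn U (j+1) a (fun i : Fin (j+1) =>
          extv (Fin.snoc u b : Fin (j+2) → ℝ) i.1) (extv (Fin.snoc u b : Fin (j+2) → ℝ) (j+1))
        * iterK U (j+1) a (extv (Fin.snoc u b : Fin (j+2) → ℝ) (j+1))
      = pathFn U (j+1) a u b * iterK U (j+1) a b := by
    intro u b
    have hmid : (fun i : Fin (j+1) => extv (Fin.snoc u b : Fin (j+2) → ℝ) i.1) = u := by
      funext i
      rw [extv_snoc_lt u b i.2, extv_lt u i.2]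
    rw [hmid, extv_snoc_last]
  simp_rw [hsn]
  have hswap : Integrable (Function.uncurry fun (u : Fin (j+1) → ℝ) (b : ℝ) =>
      pathFn U (j+1) a u b * iterK U (j+1) a b)
      ((Measure.pi fun _ : Fin (j+1) => kmu).prod kmu) := by
    have hm : Measurable (Function.uncurry fun (u : Fin (j+1) → ℝ) (b : ℝ) =>
        pathFn U (j+1) a u b * iterK U (j+1) a b) := by
      have hmc : Measurable fun p : (Fin (j+1) → ℝ) × ℝ => (((a : ℝ), p.2), p.1) :=
        (measurable_const.prodMk measurable_snd).prodMk measurable_fst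
      have hmc2 : Measurable fun p : (Fin (j+1) → ℝ) × ℝ => ((a : ℝ), p.2) :=
        measurable_const.prodMk measurable_snd
      exact ((pathFn_meas hU (j+1)).comp hmc).mul ((iterK_meas hU (j+1)).comp hmc2)
    refine integrable_of_bound hm.aestronglyMeasurable (C := B^(j+2) * B^(j+2)) ?_
    filter_upwards [ae_prod_mk (kmu_ae_pi_mem (j+1)) kmu_ae_mem] with p hp
    rw [Function.uncurry, abs_mul]
    exact mul_le_mul (pathFn_bound hB hUb (j+1) a ha p.1 hp.1 p.2 hp.2)
      (iterK_bound hB hUb (j+1) a ha p.2 hp.2) (abs_nonneg _) (by positivity)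
  rw [integral_integral_swap hswap]
  refine integral_congr_ae ?_
  filter_upwards [kmu_ae_mem] with b hb
  rw [integral_mul_const, pathFn_integral hB hUb hU (j+1) a ha b hb, ← pow_two]

include hU hB hUb in
lemma main_identity (j : ℕ) :
    homDensity (cycD (2*(j+2))) U = ∫ a, (∫ b, (iterK U (j+1) a b)^2 ∂kmu) ∂kmu := by
  rw [homDensity, ← kmu_pi_eq]
  rw [integral_congr_ae (Filter.Eventually.of_forall (prod_edges_eval U j))]
  exact (phase_chain hU hB hUb j (j+1) (2*j+3) (by omega) (by omega)).trans
    (phase_final hU hB hUb j)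

end mainid

noncomputable def Dq (U : ℝ → ℝ → ℝ) (n : ℕ) : ℝ :=
  ∫ a, (∫ b, (iterK U n a b)^2 ∂kmu) ∂kmu

section analysis

variable {U : ℝ → ℝ → ℝ} {B : ℝ}
variable (hU : Measurable (Function.uncurry U))
variable (hB : 1 ≤ B)
variable (hUb : ∀ x ∈ Set.Icc (0:ℝ) 1, ∀ y ∈ Set.Icc (0:ℝ) 1, |U x y| ≤ B)
variable (hanti : ∀ x ∈ Set.Icc (0:ℝ) 1, ∀ y ∈ Set.Icc (0:ℝ) 1, U x y = - U y x)

lemma integrable_km {F : ℝ → ℝ → ℝ} (hm : Measurable (Function.uncurry F)) {C : ℝ}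
    (hb : ∀ x ∈ Set.Icc (0:ℝ) 1, ∀ y ∈ Set.Icc (0:ℝ) 1, |F x y| ≤ C) :
    Integrable (Function.uncurry F) (kmu.prod kmu) := by
  refine integrable_of_bound hm.aestronglyMeasurable (C := C) ?_
  filter_upwards [ae_prod_mk kmu_ae_mem kmu_ae_mem] with p hp
  exact hb p.1 hp.1 p.2 hp.2

lemma swap_km {F : ℝ → ℝ → ℝ} (hm : Measurable (Function.uncurry F)) {C : ℝ}
    (hb : ∀ x ∈ Set.Icc (0:ℝ) 1, ∀ y ∈ Set.Icc (0:ℝ) 1, |F x y| ≤ C) :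
    ∫ x, (∫ y, F x y ∂kmu) ∂kmu = ∫ y, (∫ x, F x y ∂kmu) ∂kmu :=
  integral_integral_swap (integrable_km hm hb)

lemma prod_km {F : ℝ → ℝ → ℝ} (hm : Measurable (Function.uncurry F)) {C : ℝ}
    (hb : ∀ x ∈ Set.Icc (0:ℝ) 1, ∀ y ∈ Set.Icc (0:ℝ) 1, |F x y| ≤ C) :
    ∫ p, F p.1 p.2 ∂(kmu.prod kmu) = ∫ x, (∫ y, F x y ∂kmu) ∂kmu :=
  MeasureTheory.integral_prod _ (integrable_km hm hb)

include hU in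
lemma meas_iterK_pair (n m : ℕ) :
    Measurable (Function.uncurry fun a b => iterK U n a b * iterK U m a b) := by
  have h1 : Measurable fun p : ℝ × ℝ => iterK U n p.1 p.2 :=
    (iterK_meas hU n).comp (measurable_fst.prodMk measurable_snd)
  have h2 : Measurable fun p : ℝ × ℝ => iterK U m p.1 p.2 :=
    (iterK_meas hU m).comp (measurable_fst.prodMk measurable_snd)
  exact h1.mul h2

include hU hB hUb in
lemma Dq_prod (n : ℕ) : Dq U n = ∫ p, (iterK U n p.1 p.2)^2 ∂(kmu.prod kmu) := by
  rw [Dq]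
  symm
  have hm : Measurable (Function.uncurry fun a b => (iterK U n a b)^2) := by
    have := meas_iterK_pair hU n n
    simpa [pow_two] using this
  have hb : ∀ x ∈ Set.Icc (0:ℝ) 1, ∀ y ∈ Set.Icc (0:ℝ) 1,
      |(iterK U n x y)^2| ≤ B^(n+1) * B^(n+1) := by
    intro x hx y hy
    rw [pow_two, abs_mul]
    exact mul_le_mul (iterK_bound hB hUb n x hx y hy) (iterK_bound hB hUb n x hx y hy)
      (abs_nonneg _) (by positivity)
  exact prod_km hm hb

include hU hB hUb hanti in
lemma c_succ (n : ℕ) :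
    Dq U (n+1) = -∫ p, iterK U n p.1 p.2 * iterK U (n+2) p.1 p.2 ∂(kmu.prod kmu) := by
  rw [Dq]
  have houter : ∀ᵐ a ∂kmu, (∫ b, (iterK U (n+1) a b)^2 ∂kmu)
      = -∫ c, iterK U n a c * iterK U (n+2) a c ∂kmu := by
    filter_upwards [kmu_ae_mem] with a ha
    have hm : Measurable (Function.uncurry fun (b c : ℝ) =>
        iterK U n a c * U c b * iterK U (n+1) a b) := by
      have h1 : Measurable fun p : ℝ × ℝ => iterK U n a p.2 :=
        (iterK_meas hU n).comp (measurable_const.prodMk measurable_snd)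
      have h2 : Measurable fun p : ℝ × ℝ => U p.2 p.1 :=
        hU.comp (measurable_snd.prodMk measurable_fst)
      have h3 : Measurable fun p : ℝ × ℝ => iterK U (n+1) a p.1 :=
        (iterK_meas hU (n+1)).comp (measurable_const.prodMk measurable_fst)
      exact (h1.mul h2).mul h3
    have hbnd : ∀ x ∈ Set.Icc (0:ℝ) 1, ∀ y ∈ Set.Icc (0:ℝ) 1,
        |iterK U n a y * U y x * iterK U (n+1) a x| ≤ B^(n+1) * B * B^(n+2) := by
      intro x hx y hy
      rw [abs_mul, abs_mul]
      have hB0 : (0:ℝ) ≤ B := le_trans zero_le_one hB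
      refine mul_le_mul (mul_le_mul (iterK_bound hB hUb n a ha y hy) (hUb y hy x hx)
        (abs_nonneg _) (by positivity)) (iterK_bound hB hUb (n+1) a ha x hx)
        (abs_nonneg _) (by positivity)
    calc ∫ b, (iterK U (n+1) a b)^2 ∂kmu
        = ∫ b, ∫ c, iterK U n a c * U c b * iterK U (n+1) a b ∂kmu ∂kmu := by
          refine integral_congr_ae (Filter.Eventually.of_forall fun b => ?_)
          symm
          show (∫ c, iterK U n a c * U c b * iterK U (n+1) a b ∂kmu)
              = (iterK U (n+1) a b)^2
          rw [integral_mul_const, pow_two]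
          exact mul_comm _ _
      _ = ∫ c, ∫ b, iterK U n a c * U c b * iterK U (n+1) a b ∂kmu ∂kmu :=
          swap_km hm hbnd
      _ = ∫ c, iterK U n a c * (∫ b, U c b * iterK U (n+1) a b ∂kmu) ∂kmu := by
          refine integral_congr_ae (Filter.Eventually.of_forall fun c => ?_)
          have hring : ∀ b : ℝ, iterK U n a c * U c b * iterK U (n+1) a b
              = iterK U n a c * (U c b * iterK U (n+1) a b) := fun b => by ring
          simp_rw [hring]
          rw [integral_const_mul]
      _ = ∫ c, iterK U n a c * (-(iterK U (n+2) a c)) ∂kmu := by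
          refine integral_congr_ae ?_
          filter_upwards [kmu_ae_mem] with c hc
          congr 1
          have h1 : ∫ b, U c b * iterK U (n+1) a b ∂kmu
              = ∫ b, -(iterK U (n+1) a b * U b c) ∂kmu := by
            refine integral_congr_ae ?_
            filter_upwards [kmu_ae_mem] with b hb
            rw [hanti c hc b hb]; ring
          rw [h1, integral_neg]
          rw [show (∫ b, iterK U (n+1) a b * U b c ∂kmu) = iterK U (n+2) a c from rfl]
      _ = -∫ c, iterK U n a c * iterK U (n+2) a c ∂kmu := by
          rw [← integral_neg]
          exact integral_congr_ae (Filter.Eventually.of_forall fun c => by ring)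
  rw [integral_congr_ae houter, integral_neg]
  congr 1
  symm
  have hbnd2 : ∀ x ∈ Set.Icc (0:ℝ) 1, ∀ y ∈ Set.Icc (0:ℝ) 1,
      |iterK U n x y * iterK U (n+2) x y| ≤ B^(n+1) * B^(n+3) := by
    intro x hx y hy
    rw [abs_mul]
    exact mul_le_mul (iterK_bound hB hUb n x hx y hy) (iterK_bound hB hUb (n+2) x hx y hy)
      (abs_nonneg _) (by positivity)
  exact prod_km (meas_iterK_pair hU n (n+2)) hbnd2

end analysis

section analysis2

variable {U : ℝ → ℝ → ℝ} {B : ℝ}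
variable (hU : Measurable (Function.uncurry U))
variable (hB : 1 ≤ B)
variable (hUb : ∀ x ∈ Set.Icc (0:ℝ) 1, ∀ y ∈ Set.Icc (0:ℝ) 1, |U x y| ≤ B)
variable (hanti : ∀ x ∈ Set.Icc (0:ℝ) 1, ∀ y ∈ Set.Icc (0:ℝ) 1, U x y = - U y x)

include hU hB hUb in
lemma Pae_of_Dq_zero (n : ℕ) (h : Dq U n = 0) :
    ∀ᵐ p ∂(kmu.prod kmu), iterK U n p.1 p.2 = 0 := by
  have hDp := Dq_prod hU hB hUb n
  rw [h] at hDp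
  have hint : Integrable (fun p : ℝ × ℝ => (iterK U n p.1 p.2)^2) (kmu.prod kmu) := by
    have hm : Measurable (Function.uncurry fun a b => (iterK U n a b)^2) := by
      have := meas_iterK_pair hU n n
      simpa [pow_two] using this
    refine integrable_km hm (C := B^(n+1) * B^(n+1)) ?_
    intro x hx y hy
    rw [pow_two, abs_mul]
    exact mul_le_mul (iterK_bound hB hUb n x hx y hy) (iterK_bound hB hUb n x hx y hy)
      (abs_nonneg _) (by positivity)
  have hz := (integral_eq_zero_iff_of_nonneg (fun p => sq_nonneg _) hint).mp hDp.symm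
  filter_upwards [hz] with p hp
  exact (pow_eq_zero_iff two_ne_zero).mp hp

include hU hB hUb hanti in
lemma descent (n : ℕ) (h : Dq U (n+2) = 0) : Dq U (n+1) = 0 := by
  have hPae := Pae_of_Dq_zero hU hB hUb (n+2) h
  rw [c_succ hU hB hUb hanti n]
  have hz : ∫ p, iterK U n p.1 p.2 * iterK U (n+2) p.1 p.2 ∂(kmu.prod kmu) = 0 := by
    rw [show (0:ℝ) = ∫ _p, (0:ℝ) ∂(kmu.prod kmu) from (by simp)]
    refine integral_congr_ae ?_
    filter_upwards [hPae] with p hp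
    rw [hp, mul_zero]
  rw [hz, neg_zero]

include hU hB hUb in
lemma Dq_zero_of_U_zero (hzero : ∀ᵐ p ∂(kmu.prod kmu), U p.1 p.2 = 0) (n : ℕ) :
    Dq U n = 0 := by
  have hsl : ∀ᵐ a ∂kmu, ∀ᵐ c ∂kmu, U a c = 0 := Measure.ae_ae_of_ae_prod hzero
  have hclaim : ∀ m : ℕ, ∀ᵐ a ∂kmu, ∀ᵐ c ∂kmu, iterK U m a c = 0 := by
    intro m
    induction m with
    | zero => exact hsl
    | succ m ih =>
      filter_upwards [ih] with a hae
      refine Filter.Eventually.of_forall fun b => ?_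
      show (∫ c, iterK U m a c * U c b ∂kmu) = 0
      rw [show (0:ℝ) = ∫ _c, (0:ℝ) ∂kmu from (by simp)]
      refine integral_congr_ae ?_
      filter_upwards [hae] with c hc
      rw [hc, zero_mul]
  rw [Dq, show (0:ℝ) = ∫ _a, (0:ℝ) ∂kmu from (by simp)]
  refine integral_congr_ae ?_
  filter_upwards [hclaim n] with a ha
  have : ∫ b, (iterK U n a b)^2 ∂kmu = ∫ _b, (0:ℝ) ∂kmu := by
    refine integral_congr_ae ?_
    filter_upwards [ha] with b hb
    rw [hb]
    simp
  simpa using this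

end analysis2

lemma moment_zero {g : ℝ → ℝ} (hg : Measurable g) {C : ℝ} (hgb : ∀ᵐ a ∂kmu, |g a| ≤ C)
    (hmom : ∀ n : ℕ, ∫ a, a^n * g a ∂kmu = 0) : ∀ᵐ a ∂kmu, g a = 0 := by
  have hgi : Integrable g kmu := integrable_of_bound hg.aestronglyMeasurable hgb
  have hcontint : ∀ h : ℝ → ℝ, Continuous h → Integrable (fun a => h a * g a) kmu := by
    intro h hh
    obtain ⟨Ch, hCh⟩ := (isCompact_Icc : IsCompact (Set.Icc (0:ℝ) 1)).exists_bound_of_continuousOn hh.continuousOn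
    refine Integrable.bdd_mul (c := Ch) hgi hh.measurable.aestronglyMeasurable ?_
    filter_upwards [kmu_ae_mem] with a ha
    exact hCh a ha
  have hterm : ∀ i : ℕ, Integrable (fun a => a^i * g a) kmu := fun i =>
    hcontint _ (continuous_pow i)
  have hpoly : ∀ p : Polynomial ℝ, ∫ a, p.eval a * g a ∂kmu = 0 := by
    intro p
    have hed : ∀ a : ℝ, p.eval a * g a
        = ∑ i ∈ Finset.range (p.natDegree + 1), p.coeff i * (a^i * g a) := by
      intro a
      rw [Polynomial.eval_eq_sum_range, Finset.sum_mul]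
      exact Finset.sum_congr rfl fun i _ => by ring
    simp_rw [hed]
    rw [integral_finset_sum _ (fun i _ => (hterm i).const_mul (p.coeff i))]
    refine Finset.sum_eq_zero fun i _ => ?_
    rw [integral_const_mul, hmom i, mul_zero]
  have hcont : ∀ f : ℝ → ℝ, Continuous f → ∫ a, f a * g a ∂kmu = 0 := by
    intro f hf
    set K : ℝ := |C| + 1 with hK
    have hK0 : 0 < K := by positivity
    have habs : ∀ ε : ℝ, 0 < ε → |∫ a, f a * g a ∂kmu| ≤ ε * K := by
      intro ε hε
      set fc : C(Set.Icc (0:ℝ) 1, ℝ) :=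
        ContinuousMap.restrict (Set.Icc (0:ℝ) 1) ⟨f, hf⟩ with hfc
      have hmem : fc ∈ (polynomialFunctions (Set.Icc (0:ℝ) 1)).topologicalClosure := by
        rw [polynomialFunctions_closure_eq_top]
        trivial
      have hmem2 : fc ∈ closure
          ((polynomialFunctions (Set.Icc (0:ℝ) 1) : Subalgebra ℝ _) : Set _) := hmem
      rw [Metric.mem_closure_iff] at hmem2
      obtain ⟨q, hqmem, hqd⟩ := hmem2 ε hε
      rw [polynomialFunctions_coe] at hqmem
      obtain ⟨p, rfl⟩ := hqmem
      have hsplit : ∫ a, f a * g a ∂kmu = ∫ a, (f a - p.eval a) * g a ∂kmu := by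
        have h1 : ∫ a, (f a - p.eval a) * g a ∂kmu
            = ∫ a, f a * g a ∂kmu - ∫ a, p.eval a * g a ∂kmu := by
          simp_rw [sub_mul]
          exact integral_sub (hcontint f hf) (hcontint _ p.continuous_aeval)
        rw [h1, hpoly p, sub_zero]
      rw [hsplit]
      calc |∫ a, (f a - p.eval a) * g a ∂kmu|
          ≤ ∫ a, |(f a - p.eval a) * g a| ∂kmu := by
            simp only [abs_mul]
            have hni := norm_integral_le_integral_norm
              (f := fun a => (f a - Polynomial.eval a p) * g a) (μ := kmu)
            simpa [Real.norm_eq_abs, abs_mul] using hni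
        _ ≤ ∫ _a, ε * K ∂kmu := by
            refine integral_mono_ae ((hcontint _ (hf.sub p.continuous_aeval)).abs)
              (integrable_const _) ?_
            filter_upwards [kmu_ae_mem, hgb] with a ha hga
            rw [abs_mul]
            have hfp : |f a - Polynomial.eval a p| ≤ ε := by
              have hd := ContinuousMap.dist_apply_le_dist
                (f := fc) (g := Polynomial.toContinuousMapOnAlgHom (Set.Icc (0:ℝ) 1) p)
                (⟨a, ha⟩ : Set.Icc (0:ℝ) 1)
              have heval : (Polynomial.toContinuousMapOnAlgHom (Set.Icc (0:ℝ) 1) p)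
                  (⟨a, ha⟩ : Set.Icc (0:ℝ) 1) = Polynomial.eval a p := rfl
              have hfceval : fc (⟨a, ha⟩ : Set.Icc (0:ℝ) 1) = f a := rfl
              rw [heval, hfceval, Real.dist_eq] at hd
              exact le_of_lt (lt_of_le_of_lt hd hqd)
            have hgK : |g a| ≤ K := le_trans hga (by rw [hK]; cases abs_cases C with
              | inl h => rw [h.1] at *; linarith
              | inr h => linarith [h.1, abs_nonneg C])
            exact mul_le_mul hfp hgK (abs_nonneg _) (le_of_lt hε)
        _ = ε * K := by simp
    have hle0 : |∫ a, f a * g a ∂kmu| ≤ 0 := by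
      refine le_of_forall_pos_le_add ?_
      intro δ hδ
      have := habs (δ / K) (by positivity)
      rw [div_mul_cancel₀] at this
      · linarith
      · exact ne_of_gt hK0
    exact abs_eq_zero.mp (le_antisymm hle0 (abs_nonneg _))
  have := ae_eq_zero_of_integral_contDiff_smul_eq_zero (μ := kmu) (f := g)
    hgi.locallyIntegrable (fun t ht _hts => by
      simp only [smul_eq_mul]
      exact hcont t ht.continuous)
  exact this

section analysis3

variable {U : ℝ → ℝ → ℝ} {B : ℝ}
variable (hU : Measurable (Function.uncurry U))
variable (hB : 1 ≤ B)
variable (hUb : ∀ x ∈ Set.Icc (0:ℝ) 1, ∀ y ∈ Set.Icc (0:ℝ) 1, |U x y| ≤ B)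
variable (hanti : ∀ x ∈ Set.Icc (0:ℝ) 1, ∀ y ∈ Set.Icc (0:ℝ) 1, U x y = - U y x)

include hU hB hUb hanti in
lemma U_ae_zero_of_P1 (hP1 : ∀ᵐ p ∂(kmu.prod kmu), iterK U 1 p.1 p.2 = 0) :
    ∀ᵐ p ∂(kmu.prod kmu), U p.1 p.2 = 0 := by
  have hB0 : (0:ℝ) < B := lt_of_lt_of_le zero_lt_one hB
  have hslice : ∀ᵐ a ∂kmu, ∀ᵐ b ∂kmu, iterK U 1 a b = 0 := Measure.ae_ae_of_ae_prod hP1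
  have hpwb : ∀ᵐ a ∂kmu, ∀ n : ℕ, |a ^ n| ≤ 1 := by
    filter_upwards [kmu_ae_mem] with a ha n
    rw [abs_pow]
    exact pow_le_one₀ (abs_nonneg a) (abs_le.mpr ⟨by linarith [ha.1], ha.2⟩)
  have key : ∀ n : ℕ, ∀ᵐ c ∂kmu, ∫ a, a^n * U a c ∂kmu = 0 := by
    intro n
    set T : ℝ → ℝ := fun c => ∫ a, a^n * U a c ∂kmu with hT
    have hTmeas : Measurable T := by
      refine (MeasureTheory.StronglyMeasurable.integral_prod_right
        (f := fun (c a : ℝ) => a^n * U a c) ?_).measurable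
      exact ((measurable_snd.pow_const n).mul
        (hU.comp (measurable_snd.prodMk measurable_fst))).stronglyMeasurable
    have hTbd : ∀ c ∈ Set.Icc (0:ℝ) 1, |T c| ≤ B := by
      intro c hc
      have hbd : ∀ᵐ a ∂kmu, ‖a ^ n * U a c‖ ≤ 1 * B := by
        filter_upwards [kmu_ae_mem, hpwb] with a ha hap
        rw [Real.norm_eq_abs, abs_mul]
        exact mul_le_mul (hap n) (hUb a ha c hc) (abs_nonneg _) zero_le_one
      calc |T c| = ‖∫ a, a^n * U a c ∂kmu‖ := rfl
        _ ≤ 1 * B * (kmu Set.univ).toReal := norm_integral_le_of_norm_le_const hbd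
        _ ≤ B := by simp
    have hsq : ∫ c, T c * T c ∂kmu = 0 := by
      have hm1 : Measurable (Function.uncurry fun (c a : ℝ) => a^n * U a c * T c) := by
        refine Measurable.mul ?_ (hTmeas.comp measurable_fst)
        exact (measurable_snd.pow_const n).mul
          (hU.comp (measurable_snd.prodMk measurable_fst))
      have hb1 : ∀ x ∈ Set.Icc (0:ℝ) 1, ∀ y ∈ Set.Icc (0:ℝ) 1,
          |y^n * U y x * T x| ≤ 1 * B * B := by
        intro x hx y hy
        rw [abs_mul, abs_mul]
        refine mul_le_mul (mul_le_mul ?_ (hUb y hy x hx) (abs_nonneg _) zero_le_one)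
          (hTbd x hx) (abs_nonneg _) (by positivity)
        rw [abs_pow]
        exact pow_le_one₀ (abs_nonneg y) (abs_le.mpr ⟨by linarith [hy.1], hy.2⟩)
      calc ∫ c, T c * T c ∂kmu
          = ∫ c, ∫ a, a^n * U a c * T c ∂kmu ∂kmu := by
            refine integral_congr_ae (Filter.Eventually.of_forall fun c => ?_)
            symm
            show (∫ a, a^n * U a c * T c ∂kmu) = T c * T c
            rw [integral_mul_const]
        _ = ∫ a, ∫ c, a^n * U a c * T c ∂kmu ∂kmu := swap_km hm1 hb1
        _ = ∫ a, a^n * (∫ c, U a c * T c ∂kmu) ∂kmu := by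
            refine integral_congr_ae (Filter.Eventually.of_forall fun a => ?_)
            have hr : ∀ c : ℝ, a^n * U a c * T c = a^n * (U a c * T c) := fun c => by ring
            simp_rw [hr]
            rw [integral_const_mul]
        _ = 0 := by
            rw [show (0:ℝ) = ∫ _a, (0:ℝ) ∂kmu from (by simp)]
            refine integral_congr_ae ?_
            filter_upwards [kmu_ae_mem, hslice] with a ha haslice
            have hinner : ∫ c, U a c * T c ∂kmu = 0 := by
              have hm2 : Measurable (Function.uncurry fun (c a' : ℝ) =>
                  U a c * (a'^n * U a' c)) := by
                refine Measurable.mul (hU.comp (measurable_const.prodMk measurable_fst)) ?_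
                exact (measurable_snd.pow_const n).mul
                  (hU.comp (measurable_snd.prodMk measurable_fst))
              have hb2 : ∀ x ∈ Set.Icc (0:ℝ) 1, ∀ y ∈ Set.Icc (0:ℝ) 1,
                  |U a x * (y^n * U y x)| ≤ B * (1 * B) := by
                intro x hx y hy
                rw [abs_mul, abs_mul]
                refine mul_le_mul (hUb a ha x hx) (mul_le_mul ?_ (hUb y hy x hx)
                  (abs_nonneg _) zero_le_one)
                  (mul_nonneg (abs_nonneg _) (abs_nonneg _)) (by positivity)
                rw [abs_pow]
                exact pow_le_one₀ (abs_nonneg y) (abs_le.mpr ⟨by linarith [hy.1], hy.2⟩)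
              calc ∫ c, U a c * T c ∂kmu
                  = ∫ c, ∫ a', U a c * (a'^n * U a' c) ∂kmu ∂kmu := by
                    refine integral_congr_ae (Filter.Eventually.of_forall fun c => ?_)
                    rw [hT]
                    exact (integral_const_mul _ _).symm
                _ = ∫ a', ∫ c, U a c * (a'^n * U a' c) ∂kmu ∂kmu := swap_km hm2 hb2
                _ = ∫ a', a'^n * (∫ c, U a c * U a' c ∂kmu) ∂kmu := by
                    refine integral_congr_ae (Filter.Eventually.of_forall fun a' => ?_)
                    have hr : ∀ c : ℝ, U a c * (a'^n * U a' c)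
                        = a'^n * (U a c * U a' c) := fun c => by ring
                    simp_rw [hr]
                    rw [integral_const_mul]
                _ = ∫ a', a'^n * (-(iterK U 1 a a')) ∂kmu := by
                    refine integral_congr_ae ?_
                    filter_upwards [kmu_ae_mem] with a' ha'
                    congr 1
                    have h1 : ∫ c, U a c * U a' c ∂kmu
                        = ∫ c, -(U a c * U c a') ∂kmu := by
                      refine integral_congr_ae ?_
                      filter_upwards [kmu_ae_mem] with c hc
                      rw [hanti a' ha' c hc]
                      ring
                    rw [h1, integral_neg]
                    rw [show (∫ c, U a c * U c a' ∂kmu) = iterK U 1 a a' from rfl]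
                _ = 0 := by
                    rw [show (0:ℝ) = ∫ _a', (0:ℝ) ∂kmu from (by simp)]
                    refine integral_congr_ae ?_
                    filter_upwards [haslice] with a' ha'0
                    rw [ha'0]
                    ring
            rw [hinner, mul_zero]
    have hTint2 : Integrable (fun c => T c * T c) kmu := by
      refine integrable_of_bound (hTmeas.mul hTmeas).aestronglyMeasurable (C := B * B) ?_
      filter_upwards [kmu_ae_mem] with c hc
      rw [abs_mul]
      exact mul_le_mul (hTbd c hc) (hTbd c hc) (abs_nonneg _) (le_of_lt hB0)
    have := (integral_eq_zero_iff_of_nonneg_ae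
      (Filter.Eventually.of_forall fun c => mul_self_nonneg (T c)) hTint2).mp hsq
    filter_upwards [this] with c hc
    exact mul_self_eq_zero.mp hc
  have hae : ∀ᵐ c ∂kmu, ∀ n : ℕ, ∫ a, a^n * U a c ∂kmu = 0 := ae_all_iff.mpr key
  have hcol : ∀ᵐ c ∂kmu, ∀ᵐ a ∂kmu, U a c = 0 := by
    filter_upwards [hae, kmu_ae_mem] with c hc hcI
    refine moment_zero (hU.comp (measurable_id.prodMk measurable_const)) (C := B) ?_ hc
    filter_upwards [kmu_ae_mem] with a ha
    exact hUb a ha c hcI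
  have hset : MeasurableSet {p : ℝ × ℝ | U p.2 p.1 = 0} :=
    (hU.comp (measurable_snd.prodMk measurable_fst)) (measurableSet_singleton 0)
  have h1 : ∀ᵐ p ∂(kmu.prod kmu), U p.2 p.1 = 0 := by
    rw [Filter.eventually_iff, mem_ae_iff]
    rw [show {p : ℝ × ℝ | U p.2 p.1 = 0}ᶜ = {p : ℝ × ℝ | U p.2 p.1 ≠ 0} from rfl]
    rw [Measure.measure_prod_null (by exact hset.compl)]
    filter_upwards [hcol] with c hcz
    rw [show Prod.mk c ⁻¹' {p : ℝ × ℝ | U p.2 p.1 ≠ 0} = {a : ℝ | ¬ (U a c = 0)} from rfl]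
    exact ae_iff.mp hcz
  have hset2 : MeasurableSet {p : ℝ × ℝ | U p.1 p.2 = 0} := by
    have : Measurable fun p : ℝ × ℝ => U p.1 p.2 :=
      hU.comp (measurable_fst.prodMk measurable_snd)
    exact this (measurableSet_singleton 0)
  rw [Filter.eventually_iff, mem_ae_iff]
  rw [show (kmu.prod kmu) = Measure.map Prod.swap (kmu.prod kmu) from (Measure.prod_swap).symm]
  rw [Measure.map_apply measurable_swap hset2.compl]
  rw [Filter.eventually_iff, mem_ae_iff] at h1
  rw [show Prod.swap ⁻¹' {p : ℝ × ℝ | U p.1 p.2 = 0}ᶜ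
      = {p : ℝ × ℝ | U p.2 p.1 = 0}ᶜ from rfl]
  exact h1

end analysis3

/-- `t(D_{2k},U) ≥ 0` for every antisymmetric kernel `U`, with equality iff
`U = 0` a.e. on the unit square. -/
theorem density_cycD_nonneg (k : ℕ) (hk : 2 ≤ k)
    (U : ℝ → ℝ → ℝ) (hU : IsAntisymmetricKernel U) :
    0 ≤ homDensity (cycD (2 * k)) U ∧
    (homDensity (cycD (2 * k)) U = 0 ↔
      (∀ᵐ p : ℝ × ℝ ∂squareMeasure, U p.1 p.2 = 0)) := by
  obtain ⟨hUm, ⟨M, hM⟩, hanti⟩ := hU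
  set B := max M 1 with hBdef
  have hB : (1:ℝ) ≤ B := le_max_right _ _
  have hUb : ∀ x ∈ Set.Icc (0:ℝ) 1, ∀ y ∈ Set.Icc (0:ℝ) 1, |U x y| ≤ B :=
    fun x hx y hy => le_trans (hM x hx y hy) (le_max_left _ _)
  obtain ⟨j, rfl⟩ : ∃ j, k = j + 2 := ⟨k - 2, by omega⟩
  have hsq : squareMeasure = kmu.prod kmu := by
    rw [squareMeasure, Measure.volume_eq_prod, ← Measure.prod_restrict]
    rfl
  have hmain : homDensity (cycD (2 * (j+2))) U = Dq U (j+1) := main_identity hUm hB hUb j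
  refine ⟨?_, ?_, ?_⟩
  · rw [hmain, Dq]
    exact integral_nonneg fun a => integral_nonneg fun b => sq_nonneg _
  · intro h0
    rw [hmain] at h0
    have hchain : ∀ i, i ≤ j → Dq U (j + 1 - i) = 0 := by
      intro i
      induction i with
      | zero => intro _; exact h0
      | succ i ih =>
        intro hle
        have hprev := ih (by omega)
        rw [show j + 1 - i = (j - (i+1)) + 2 from by omega] at hprev
        have hstep := descent hUm hB hUb hanti (j - (i+1)) hprev
        rw [show j + 1 - (i+1) = (j - (i+1)) + 1 from by omega]
        exact hstep
    have hc1 : Dq U 1 = 0 := by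
      have := hchain j le_rfl
      rwa [show j + 1 - j = 1 from by omega] at this
    have hP1 := Pae_of_Dq_zero hUm hB hUb 1 hc1
    rw [hsq]
    exact U_ae_zero_of_P1 hUm hB hUb hanti hP1
  · intro hz
    rw [hsq] at hz
    rw [hmain]
    exact Dq_zero_of_U_zero hUm hB hUb hz (j+1)
end

section
/- No orientation of a cycle of odd length is quasirandom-forcing. That is, for every orientation C of a cycle with an odd number of edges there exists a tournamenton W that is not equal to 1/2 almost everywhere and satisfies t(C,W) = 2^{-‖C‖}. -/
open MeasureTheory
open scoped Classical

namespace OddCycleAux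

/-! ### 3×3 transfer matrices -/

noncomputable def Jm : Matrix (Fin 3) (Fin 3) ℝ := Matrix.of fun _ _ => 1

noncomputable def Nm : Matrix (Fin 3) (Fin 3) ℝ :=
  Matrix.of fun a b => if a = b then 0 else if b = a + 1 then 1/2 else -(1/2)

noncomputable def Mm (b : Bool) : Matrix (Fin 3) (Fin 3) ℝ :=
  (1/2 : ℝ) • Jm + (if b then (1:ℝ) else -1) • Nm

lemma Jm_mul_Jm : Jm * Jm = (3:ℝ) • Jm := by
  ext i j
  simp [Matrix.mul_apply, Fin.sum_univ_three, Jm]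

lemma Jm_mul_Nm : Jm * Nm = 0 := by
  ext i j
  fin_cases i <;> fin_cases j <;>
    simp [Matrix.mul_apply, Fin.sum_univ_three, Jm, Nm]

lemma Nm_mul_Jm : Nm * Jm = 0 := by
  ext i j
  fin_cases i <;> fin_cases j <;>
    simp [Matrix.mul_apply, Fin.sum_univ_three, Jm, Nm]

lemma Nm_cube : Nm^3 = (-(3/4) : ℝ) • Nm := by
  ext i j
  fin_cases i <;> fin_cases j <;>
    simp [pow_succ, pow_zero, Matrix.mul_apply, Fin.sum_univ_three, Nm] <;>
    norm_num [Fin.ext_iff]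

lemma trace_Jm : Matrix.trace Jm = 3 := by
  simp [Matrix.trace, Fin.sum_univ_three, Jm]

lemma trace_Nm : Matrix.trace Nm = 0 := by
  simp [Matrix.trace, Fin.sum_univ_three, Nm]

lemma Jm_mul_Nm_pow (n : ℕ) : Jm * Nm^(n+1) = 0 := by
  rw [pow_succ', ← Matrix.mul_assoc, Jm_mul_Nm, Matrix.zero_mul]

lemma Nm_pow_mul_Jm (n : ℕ) : Nm^(n+1) * Jm = 0 := by
  rw [pow_succ, Matrix.mul_assoc, Nm_mul_Jm, Matrix.mul_zero]

lemma Nm_odd_pow (k : ℕ) : Nm^(2*k+1) = ((-(3/4) : ℝ)^k) • Nm := by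
  induction k with
  | zero => simp
  | succ k ih =>
    rw [show 2*(k+1)+1 = (2*k+1)+2 from by ring, pow_add, ih, Matrix.smul_mul,
      ← pow_succ', show (2:ℕ)+1 = 3 from rfl, Nm_cube, smul_smul, pow_succ]

/-! ### products of transfer matrices -/

noncomputable def Pmat : ℕ → (ℕ → Bool) → Matrix (Fin 3) (Fin 3) ℝ
  | 0, _ => 1
  | n+1, ε => Mm (ε 0) * Pmat n (fun j => ε (j+1))

lemma Mm_eq (b : Bool) : Mm b = (1/2 : ℝ) • Jm + (if b then (1:ℝ) else -1) • Nm := rfl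

lemma Pform : ∀ (n : ℕ) (ε : ℕ → Bool), ∃ s : ℝ, (s = 1 ∨ s = -1) ∧
    Pmat (n+1) ε = ((1/2)*(3/2)^n : ℝ) • Jm + s • Nm^(n+1) := by
  intro n
  induction n with
  | zero =>
    intro ε
    refine ⟨if ε 0 then 1 else -1, by split <;> simp, ?_⟩
    simp [Pmat, Mm_eq]
  | succ n ih =>
    intro ε
    obtain ⟨s, hs, hP⟩ := ih (fun j => ε (j+1))
    refine ⟨(if ε 0 then (1:ℝ) else -1) * s, ?_, ?_⟩
    · rcases hs with h | h <;> subst h <;> split <;> norm_num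
    · show Mm (ε 0) * Pmat (n+1) (fun j => ε (j+1)) = _
      rw [hP, Mm_eq, add_mul, smul_mul_assoc, smul_mul_assoc, mul_add, mul_add,
        mul_smul_comm, mul_smul_comm, mul_smul_comm, mul_smul_comm,
        Jm_mul_Jm, Jm_mul_Nm_pow, Nm_mul_Jm, ← pow_succ']
      rw [pow_succ (3/2 : ℝ)]
      module

lemma traceP (k : ℕ) (ε : ℕ → Bool) :
    Matrix.trace (Pmat (2*k+1) ε) = (3/2 : ℝ)^(2*k+1) := by
  obtain ⟨s, hs, hP⟩ := Pform (2*k) ε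
  rw [hP, Matrix.trace_add, Matrix.trace_smul, Matrix.trace_smul, trace_Jm,
    Nm_odd_pow, Matrix.trace_smul, trace_Nm]
  simp only [smul_zero, smul_eq_mul, add_zero]
  rw [pow_succ]
  ring

/-! ### path and cycle sums -/

noncomputable def ext (m : ℕ) (x y : Fin 3) (b : Fin m → Fin 3) (j : ℕ) : Fin 3 :=
  if h : 0 < j ∧ j ≤ m then b ⟨j-1, by omega⟩ else if j = 0 then x else y

lemma ext_zero (m : ℕ) (x y : Fin 3) (b : Fin m → Fin 3) : ext m x y b 0 = x := by
  simp [ext]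

lemma ext_last (m : ℕ) (x y : Fin 3) (b : Fin m → Fin 3) : ext m x y b (m+1) = y := by
  rw [ext, dif_neg (by omega), if_neg (by omega)]

lemma ext_shift (m : ℕ) (x y z : Fin 3) (b : Fin m → Fin 3) (j : ℕ) :
    ext (m+1) x y (Fin.cons z b) (j+1) = ext m z y b j := by
  rcases Nat.eq_zero_or_pos j with hj | hj
  · subst hj
    rw [ext, ext, dif_pos (by omega), dif_neg (by omega)]
    simp
  · by_cases hjm : j ≤ m
    · rw [ext, ext, dif_pos (by omega), dif_pos (by omega)]
      have : (⟨j+1-1, by omega⟩ : Fin (m+1)) = Fin.succ ⟨j-1, by omega⟩ := by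
        apply Fin.ext; simp; omega
      rw [this, Fin.cons_succ]
    · rw [ext, ext, dif_neg (by omega), dif_neg (by omega), if_neg (by omega), if_neg (by omega)]

lemma ext_one (m : ℕ) (x y : Fin 3) (b : Fin (m+1) → Fin 3) : ext (m+1) x y b 1 = b 0 := by
  rw [ext, dif_pos (by omega)]
  exact congrArg b (by apply Fin.ext; norm_num)

lemma pathSum : ∀ (m : ℕ) (ε : ℕ → Bool) (x y : Fin 3),
    ∑ b : Fin m → Fin 3, ∏ j ∈ Finset.range (m+1),
      Mm (ε j) (ext m x y b j) (ext m x y b (j+1)) = Pmat (m+1) ε x y := by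
  intro m
  induction m with
  | zero =>
    intro ε x y
    have h1 : ∀ b : Fin 0 → Fin 3, (∏ j ∈ Finset.range 1,
        Mm (ε j) (ext 0 x y b j) (ext 0 x y b (j+1))) = Mm (ε 0) x y := by
      intro b
      rw [Finset.prod_range_one, ext_zero, ext_last]
    rw [Finset.sum_congr rfl (fun b _ => h1 b), Finset.sum_const]
    simp [Pmat]
  | succ m ih =>
    intro ε x y
    have hsplit : ∀ b : Fin (m+1) → Fin 3,
        (∏ j ∈ Finset.range (m+2), Mm (ε j) (ext (m+1) x y b j) (ext (m+1) x y b (j+1)))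
        = (∏ j ∈ Finset.range (m+1),
            Mm (ε (j+1)) (ext (m+1) x y b (j+1)) (ext (m+1) x y b (j+1+1))) *
          Mm (ε 0) x (b 0) := by
      intro b
      rw [Finset.prod_range_succ' _ (m+1), ext_zero, ext_one]
    rw [Finset.sum_congr rfl (fun b _ => hsplit b)]
    rw [← Equiv.sum_comp (Fin.consEquiv (fun _ : Fin (m+1) => Fin 3)), Fintype.sum_prod_type]
    simp only [show ∀ (z : Fin 3) (c : Fin m → Fin 3),
        (Fin.consEquiv fun _ : Fin (m+1) => Fin 3) (z, c) = Fin.cons z c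
      from fun _ _ => rfl, ext_shift, Fin.cons_zero]
    rw [show Pmat (m+2) ε = Mm (ε 0) * Pmat (m+1) (fun j => ε (j+1)) from rfl,
      Matrix.mul_apply]
    refine Finset.sum_congr rfl fun z _ => ?_
    have key := ih (fun j => ε (j+1)) z y
    beta_reduce at key
    rw [← Finset.sum_mul, mul_comm, key]

def vmod (m j : ℕ) : Fin (m+1) := ⟨j % (m+1), Nat.mod_lt _ (Nat.succ_pos m)⟩

lemma mod_succ_cases (m x : ℕ) (hx : x < m+1) :
    ((x+1) % (m+1) = x+1 ∧ x < m) ∨ ((x+1) % (m+1) = 0 ∧ x = m) := by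
  rcases Nat.lt_or_ge x m with h | h
  · exact Or.inl ⟨Nat.mod_eq_of_lt (by omega), h⟩
  · have : x = m := by omega
    subst this
    exact Or.inr ⟨by simp, rfl⟩

lemma cons_vmod_eq_ext (m : ℕ) (x : Fin 3) (b : Fin m → Fin 3) (j : ℕ) (hj : j ≤ m+1) :
    (Fin.cons x b : Fin (m+1) → Fin 3) (vmod m j) = ext m x x b j := by
  rcases Nat.eq_zero_or_pos j with h0 | h0
  · subst h0
    rw [show vmod m 0 = 0 from Fin.ext (by simp [vmod]), Fin.cons_zero, ext_zero]
  · by_cases hjm : j ≤ m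
    · rw [ext, dif_pos (by omega)]
      have : vmod m j = Fin.succ ⟨j-1, by omega⟩ := by
        apply Fin.ext
        show j % (m+1) = (j-1)+1
        rw [Nat.mod_eq_of_lt (by omega)]
        omega
      rw [this, Fin.cons_succ]
    · have hj1 : j = m+1 := by omega
      subst hj1
      rw [show vmod m (m+1) = 0 from Fin.ext (by simp [vmod]), Fin.cons_zero,
        ext, dif_neg (by omega), if_neg (by omega)]

lemma cycSum (m : ℕ) (ε : ℕ → Bool) :
    ∑ a : Fin (m+1) → Fin 3, ∏ j ∈ Finset.range (m+1),
      Mm (ε j) (a (vmod m j)) (a (vmod m (j+1))) = Matrix.trace (Pmat (m+1) ε) := by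
  rw [← Equiv.sum_comp (Fin.consEquiv (fun _ : Fin (m+1) => Fin 3)), Fintype.sum_prod_type]
  simp only [show ∀ (z : Fin 3) (c : Fin m → Fin 3),
      (Fin.consEquiv fun _ : Fin (m+1) => Fin 3) (z, c) = Fin.cons z c
    from fun _ _ => rfl]
  rw [Matrix.trace]
  refine Finset.sum_congr rfl fun x _ => ?_
  rw [show (Pmat (m+1) ε).diag x = Pmat (m+1) ε x x from rfl, ← pathSum m ε x x]
  refine Finset.sum_congr rfl fun b _ => Finset.prod_congr rfl fun j hj => ?_
  rw [Finset.mem_range] at hj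
  rw [cons_vmod_eq_ext m x b j (by omega), cons_vmod_eq_ext m x b (j+1) (by omega)]

/-! ### pointwise facts about the kernel matrix -/

lemma Mm_false_eq (x y : Fin 3) : Mm false x y = Mm true y x := by
  fin_cases x <;> fin_cases y <;>
    simp [Mm, Jm, Nm, Matrix.add_apply, Matrix.smul_apply] <;> norm_num

lemma Mm_nonneg (x y : Fin 3) : 0 ≤ Mm true x y := by
  fin_cases x <;> fin_cases y <;>
    simp [Mm, Jm, Nm, Matrix.add_apply, Matrix.smul_apply] <;> norm_num

lemma Mm_le_one (x y : Fin 3) : Mm true x y ≤ 1 := by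
  fin_cases x <;> fin_cases y <;>
    simp [Mm, Jm, Nm, Matrix.add_apply, Matrix.smul_apply] <;> norm_num

lemma Mm_add (x y : Fin 3) : Mm true x y + Mm true y x = 1 := by
  fin_cases x <;> fin_cases y <;>
    simp [Mm, Jm, Nm, Matrix.add_apply, Matrix.smul_apply] <;> norm_num

lemma Mm_zero_one : Mm true 0 1 = 1 := by
  simp [Mm, Jm, Nm, Matrix.add_apply, Matrix.smul_apply]
  norm_num

/-! ### the cycle structure -/

section Graph

variable {m : ℕ} (C : OrientedGraph (Fin (m+1)))

def nxt (i : Fin (m+1)) : Fin (m+1) := vmod m (i.val+1)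

def pos (e : Fin (m+1) × Fin (m+1)) : Fin (m+1) :=
  if e.2.val = (e.1.val + 1) % (m+1) then e.1 else e.2

def eAt (i : Fin (m+1)) : Fin (m+1) × Fin (m+1) :=
  if (i, nxt i) ∈ C.edges then (i, nxt i) else (nxt i, i)

def εC (j : ℕ) : Bool := if (vmod m j, vmod m (j+1)) ∈ C.edges then true else false

variable (hm : 3 ≤ m + 1) (hC : IsCycleOrientation C)
include hm hC

lemma edge_cases : ∀ e ∈ C.edges,
    (e = (pos e, nxt (pos e)) ∧ pos e = e.1) ∨
    (e = (nxt (pos e), pos e) ∧ pos e = e.2) := by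
  intro e he
  rcases hC.1 e he with h | h
  · left
    have hp : pos e = e.1 := if_pos h
    refine ⟨?_, hp⟩
    rw [hp]
    have : e.2 = nxt e.1 := Fin.ext (by simpa [nxt, vmod] using h)
    rw [← this]
  · right
    have hne : ¬ (e.2.val = (e.1.val + 1) % (m+1)) := by
      intro h'
      rcases mod_succ_cases m e.1.val e.1.isLt with ⟨q1, r1⟩ | ⟨q1, r1⟩ <;>
        rcases mod_succ_cases m e.2.val e.2.isLt with ⟨q2, r2⟩ | ⟨q2, r2⟩ <;>
          rw [q1] at h' <;> rw [q2] at h <;> omega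
    have hp : pos e = e.2 := if_neg hne
    refine ⟨?_, hp⟩
    rw [hp]
    have : e.1 = nxt e.2 := Fin.ext (by simpa [nxt, vmod] using h)
    rw [← this]

omit hm in
lemma eAt_mem : ∀ i : Fin (m+1), eAt C i ∈ C.edges := by
  intro i
  obtain ⟨e, he, hcase⟩ := hC.2 i
  rcases hcase with ⟨h1, h2⟩ | ⟨h1, h2⟩
  · have : e = (i, nxt i) := by
      have h3 : e.2 = nxt i := Fin.ext (by simpa [nxt, vmod] using h2)
      exact Prod.ext h1 h3
    rw [this] at he
    rw [eAt, if_pos he]; exact he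
  · have heq : e = (nxt i, i) := by
      have h3 : e.1 = nxt i := Fin.ext (by simpa [nxt, vmod] using h2)
      exact Prod.ext h3 h1
    rw [heq] at he
    have : (i, nxt i) ∉ C.edges := C.antisymm _ _ he
    rw [eAt, if_neg this]; exact he

lemma eAt_pos : ∀ e ∈ C.edges, eAt C (pos e) = e := by
  intro e he
  rcases edge_cases C hm hC e he with ⟨h1, _⟩ | ⟨h1, _⟩
  · rw [eAt, if_pos (by rw [← h1]; exact he)]; exact h1.symm
  · have : (pos e, nxt (pos e)) ∉ C.edges := by
      have := C.antisymm _ _ (h1 ▸ he)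
      exact this
    rw [eAt, if_neg this]; exact h1.symm

omit hC in
lemma pos_eAt : ∀ i : Fin (m+1), pos (eAt C i) = i := by
  intro i
  rw [eAt]
  split
  · rw [pos, if_pos]; rfl
  · rw [pos, if_neg]
    have hi := i.isLt
    show ¬ (i.val = ((i.val+1) % (m+1) + 1) % (m+1))
    intro h'
    rcases mod_succ_cases m i.val i.isLt with ⟨q1, r1⟩ | ⟨q1, r1⟩ <;> rw [q1] at h'
    · rcases mod_succ_cases m (i.val+1) (by omega) with ⟨q2, r2⟩ | ⟨q2, r2⟩ <;>
        rw [q2] at h' <;> omega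
    · rw [Nat.mod_eq_of_lt (by omega)] at h'
      omega

omit hm hC in
lemma vmod_val (i : Fin (m+1)) : vmod m i.val = i := Fin.ext (Nat.mod_eq_of_lt i.isLt)

lemma card_edges : C.edges.card = m+1 := by
  rw [Finset.card_nbij' pos (eAt C) (fun e _ => Finset.mem_univ _)
    (fun i _ => eAt_mem C hC i) (eAt_pos C hm hC) (fun i _ => pos_eAt C hm i),
    Finset.card_univ, Fintype.card_fin]

lemma prod_reindex (a : Fin (m+1) → Fin 3) :
    ∏ e ∈ C.edges, Mm true (a e.1) (a e.2)
      = ∏ i : Fin (m+1), Mm (εC C i.val) (a i) (a (nxt i)) := by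
  refine Finset.prod_nbij' pos (eAt C) (fun e _ => Finset.mem_univ _)
    (fun i _ => eAt_mem C hC i) (eAt_pos C hm hC) (fun i _ => pos_eAt C hm i) ?_
  intro e he
  obtain ⟨h1, h2⟩ | ⟨h1, h2⟩ := edge_cases C hm hC e he
  · rw [h2] at h1 ⊢
    have h3 : e.2 = nxt e.1 := congrArg Prod.snd h1
    have hmem : (e.1, nxt e.1) ∈ C.edges := by rw [← h3]; exact he
    rw [show εC C e.1.val = true from by simp only [εC]; rw [vmod_val]; exact if_pos hmem,
      ← h3]
  · rw [h2] at h1 ⊢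
    have h3 : e.1 = nxt e.2 := congrArg Prod.fst h1
    have hnot : (e.2, nxt e.2) ∉ C.edges := by rw [← h3]; exact C.antisymm _ _ he
    rw [show εC C e.2.val = false from by simp only [εC]; rw [vmod_val]; exact if_neg hnot,
      Mm_false_eq, ← h3]

end Graph

/-! ### the step tournamenton -/

noncomputable def s3 (t : ℝ) : Fin 3 := if t < 1/3 then 0 else if t < 2/3 then 1 else 2

noncomputable def Itv : Fin 3 → Set ℝ
  | 0 => Set.Ico 0 (1/3)
  | 1 => Set.Ico (1/3) (2/3)
  | 2 => Set.Icc (2/3) 1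

lemma s3_meas : Measurable s3 :=
  Measurable.ite (measurableSet_lt measurable_id measurable_const) measurable_const
    (Measurable.ite (measurableSet_lt measurable_id measurable_const) measurable_const
      measurable_const)

lemma mem_Itv_s3 {t : ℝ} (ht : t ∈ Set.Icc (0:ℝ) 1) : t ∈ Itv (s3 t) := by
  obtain ⟨h0, h1⟩ := ht
  by_cases ha : t < 1/3
  · rw [s3, if_pos ha]; exact ⟨h0, ha⟩
  · by_cases hb : t < 2/3
    · rw [s3, if_neg ha, if_pos hb]; exact ⟨by linarith, hb⟩
    · rw [s3, if_neg ha, if_neg hb]; exact ⟨by linarith, h1⟩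

lemma s3_eq_of_mem {t : ℝ} {k : Fin 3} (h : t ∈ Itv k) : s3 t = k := by
  fin_cases k
  · obtain ⟨h0, h1⟩ := h
    rw [s3, if_pos h1]
    rfl
  · obtain ⟨h0, h1⟩ := h
    rw [s3, if_neg (by linarith), if_pos h1]
    rfl
  · obtain ⟨h0, h1⟩ := h
    rw [s3, if_neg (by linarith), if_neg (by linarith)]
    rfl

lemma Itv_subset (k : Fin 3) : Itv k ⊆ Set.Icc (0:ℝ) 1 := by
  fin_cases k
  · exact fun t ⟨h0, h1⟩ => ⟨h0, by linarith⟩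
  · exact fun t ⟨h0, h1⟩ => ⟨by linarith, by linarith⟩
  · exact fun t ⟨h0, h1⟩ => ⟨by linarith, h1⟩

lemma Itv_meas (k : Fin 3) : MeasurableSet (Itv k) := by
  fin_cases k
  · exact measurableSet_Ico
  · exact measurableSet_Ico
  · exact measurableSet_Icc

lemma Itv_vol (k : Fin 3) : volume (Itv k) = ENNReal.ofReal (1/3) := by
  fin_cases k
  · show volume (Set.Ico (0:ℝ) (1/3)) = _
    rw [Real.volume_Ico]; norm_num
  · show volume (Set.Ico (1/3 : ℝ) (2/3)) = _
    rw [Real.volume_Ico]; norm_num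
  · show volume (Set.Icc (2/3 : ℝ) 1) = _
    rw [Real.volume_Icc]; norm_num

lemma integral_comp_s3 {ι : Type} [Fintype ι] [DecidableEq ι] (Φ : (ι → Fin 3) → ℝ) :
    ∫ x in Set.univ.pi (fun _ : ι => Set.Icc (0:ℝ) 1), Φ (fun i => s3 (x i))
      = ∑ a : ι → Fin 3, ((1:ℝ)/3)^(Fintype.card ι) * Φ a := by
  set box : (ι → Fin 3) → Set (ι → ℝ) := fun a => Set.univ.pi fun i => Itv (a i) with hbox_def
  have hbox : ∀ a, MeasurableSet (box a) := fun a => MeasurableSet.univ_pi fun i => Itv_meas _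
  have hvol : ∀ a, volume (box a) = (ENNReal.ofReal (1/3))^(Fintype.card ι) := by
    intro a
    rw [hbox_def]
    rw [volume_pi_pi]
    simp [Itv_vol, Finset.prod_const, Finset.card_univ]
  have heq : ∀ a, Set.EqOn (fun x : ι → ℝ => Φ (fun i => s3 (x i))) (fun _ => Φ a) (box a) := by
    intro a x hx
    have : (fun i => s3 (x i)) = a := funext fun i => s3_eq_of_mem (hx i trivial)
    simp only [this]
  have hint : ∀ a, IntegrableOn (fun x : ι → ℝ => Φ (fun i => s3 (x i))) (box a) volume := by
    intro a
    have hc : IntegrableOn (fun _ : ι → ℝ => Φ a) (box a) volume := by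
      refine integrableOn_const ?_
      rw [hvol a]
      exact ENNReal.pow_ne_top ENNReal.ofReal_ne_top
    exact hc.congr_fun (heq a).symm (hbox a)
  have hunion : Set.univ.pi (fun _ : ι => Set.Icc (0:ℝ) 1) = ⋃ a : ι → Fin 3, box a := by
    ext x
    simp only [Set.mem_pi, Set.mem_univ, true_implies, Set.mem_iUnion, hbox_def]
    constructor
    · intro h
      exact ⟨fun i => s3 (x i), fun i => mem_Itv_s3 (h i)⟩
    · rintro ⟨a, ha⟩ i
      exact Itv_subset _ (ha i)
  have hdisj : Pairwise (Function.onFun Disjoint box) := by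
    intro a b hab
    obtain ⟨i, hi⟩ := Function.ne_iff.1 hab
    refine Set.disjoint_left.2 fun x hxa hxb => hi ?_
    rw [← s3_eq_of_mem (hxa i trivial), ← s3_eq_of_mem (hxb i trivial)]
  rw [hunion, integral_iUnion_fintype hbox hdisj hint]
  refine Finset.sum_congr rfl fun a _ => ?_
  rw [setIntegral_congr_fun (hbox a) (heq a), setIntegral_const, measureReal_def, hvol a]
  rw [ENNReal.toReal_pow, ENNReal.toReal_ofReal (by norm_num)]
  simp [smul_eq_mul]

end OddCycleAux

/-- no orientation of an odd cycle is quasirandom-forcing. -/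
theorem odd_cycle_not_quasirandomForcing (ℓ : ℕ) (hℓ : 3 ≤ ℓ) (hOdd : Odd ℓ)
    (C : OrientedGraph (Fin ℓ)) (hC : IsCycleOrientation C) :
    ∃ W : ℝ → ℝ → ℝ, IsTournamenton W ∧
      ¬ (∀ᵐ p : ℝ × ℝ ∂squareMeasure, W p.1 p.2 = 1 / 2) ∧
      homDensity C W = (1 / 2 : ℝ) ^ C.edges.card := by
  classical
  obtain ⟨m, rfl⟩ : ∃ m, ℓ = m + 1 := ⟨ℓ - 1, by omega⟩
  obtain ⟨k, hk⟩ : ∃ k, m + 1 = 2*k+1 := by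
    obtain ⟨j, hj⟩ := hOdd
    exact ⟨j, by omega⟩
  set Wf : ℝ → ℝ → ℝ := fun x y => OddCycleAux.Mm true (OddCycleAux.s3 x) (OddCycleAux.s3 y)
    with hWf
  have hmW : Measurable (Function.uncurry Wf) := by
    have : Function.uncurry Wf =
        (fun p : Fin 3 × Fin 3 => OddCycleAux.Mm true p.1 p.2) ∘
          (fun p : ℝ × ℝ => (OddCycleAux.s3 p.1, OddCycleAux.s3 p.2)) := rfl
    rw [this]
    exact (measurable_of_countable _).comp
      ((OddCycleAux.s3_meas.comp measurable_fst).prodMk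
        (OddCycleAux.s3_meas.comp measurable_snd))
  refine ⟨Wf, ⟨hmW, ?_, ?_⟩, ?_, ?_⟩
  · intro x _ y _
    exact ⟨OddCycleAux.Mm_nonneg _ _, OddCycleAux.Mm_le_one _ _⟩
  · intro x _ y _
    exact OddCycleAux.Mm_add _ _
  · intro hae
    have hset : MeasurableSet {p : ℝ × ℝ | ¬ (Wf p.1 p.2 = 1/2)} := by
      have : {p : ℝ × ℝ | ¬ (Wf p.1 p.2 = 1/2)}
          = (Function.uncurry Wf) ⁻¹' ({(1/2 : ℝ)}ᶜ) := rfl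
      rw [this]
      exact hmW (measurableSet_singleton _).compl
    rw [ae_iff] at hae
    rw [squareMeasure, Measure.restrict_apply hset] at hae
    have hsub : (Set.Ioo (0:ℝ) (1/3)) ×ˢ (Set.Ioo (1/3 : ℝ) (1/2)) ⊆
        {p : ℝ × ℝ | ¬ Wf p.1 p.2 = 1/2} ∩ (Set.Icc (0:ℝ) 1 ×ˢ Set.Icc (0:ℝ) 1) := by
      rintro ⟨x, y⟩ ⟨hx, hy⟩
      constructor
      · show ¬ (OddCycleAux.Mm true (OddCycleAux.s3 x) (OddCycleAux.s3 y) = 1/2)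
        have hsx : OddCycleAux.s3 x = 0 := by rw [OddCycleAux.s3, if_pos hx.2]
        have hsy : OddCycleAux.s3 y = 1 := by
          rw [OddCycleAux.s3, if_neg (by linarith [hy.1]), if_pos (by linarith [hy.2])]
        rw [hsx, hsy, OddCycleAux.Mm_zero_one]
        norm_num
      · exact ⟨⟨le_of_lt hx.1, by linarith [hx.2]⟩, ⟨by linarith [hy.1], by linarith [hy.2]⟩⟩
    have hle := measure_mono (μ := (volume : Measure (ℝ × ℝ))) hsub
    rw [hae] at hle
    have hz : volume ((Set.Ioo (0:ℝ) (1/3)) ×ˢ (Set.Ioo (1/3:ℝ) (1/2))) = 0 :=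
      le_antisymm hle zero_le
    rw [MeasureTheory.Measure.volume_eq_prod, Measure.prod_prod, Real.volume_Ioo,
      Real.volume_Ioo] at hz
    rcases mul_eq_zero.1 hz with h | h <;> rw [ENNReal.ofReal_eq_zero] at h <;> norm_num at h
  · have hstep : homDensity C Wf
        = ∑ a : Fin (m+1) → Fin 3, ((1:ℝ)/3)^(Fintype.card (Fin (m+1))) *
            ∏ e ∈ C.edges, OddCycleAux.Mm true (a e.1) (a e.2) :=
      OddCycleAux.integral_comp_s3
        (fun a : Fin (m+1) → Fin 3 => ∏ e ∈ C.edges, OddCycleAux.Mm true (a e.1) (a e.2))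
    rw [hstep]
    have hre : ∀ a : Fin (m+1) → Fin 3,
        (∏ e ∈ C.edges, OddCycleAux.Mm true (a e.1) (a e.2))
          = ∏ j ∈ Finset.range (m+1), OddCycleAux.Mm (OddCycleAux.εC C j)
              (a (OddCycleAux.vmod m j)) (a (OddCycleAux.vmod m (j+1))) := by
      intro a
      rw [OddCycleAux.prod_reindex C hℓ hC a]
      rw [← Fin.prod_univ_eq_prod_range (fun j => OddCycleAux.Mm (OddCycleAux.εC C j)
        (a (OddCycleAux.vmod m j)) (a (OddCycleAux.vmod m (j+1)))) (m+1)]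
      exact Finset.prod_congr rfl fun i _ => by rw [OddCycleAux.vmod_val]; rfl
    rw [Finset.sum_congr rfl fun a _ => by rw [hre a]]
    rw [← Finset.mul_sum, OddCycleAux.cycSum m (OddCycleAux.εC C)]
    have htr : Matrix.trace (OddCycleAux.Pmat (m+1) (OddCycleAux.εC C)) = (3/2 : ℝ)^(m+1) := by
      rw [hk]
      exact OddCycleAux.traceP k _
    rw [htr, OddCycleAux.card_edges C hℓ hC, Fintype.card_fin, ← mul_pow]
    norm_num
end

section
/- Let C be an orientation of a cycle. If there exist tournamentons W_1 and W_2 such that t(C,W_1) < 2^{-‖C‖} and t(C,W_2) > 2^{-‖C‖}, then C is not quasirandom-forcing, i.e. there exists a tournamenton W not equal to 1/2 almost everywhere with t(C,W) = 2^{-‖C‖}. -/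
open MeasureTheory
open scoped Classical

namespace QRF

open Set MeasureTheory

noncomputable def nuM : Measure ℝ := volume.restrict (Set.Icc 0 1)

instance : IsProbabilityMeasure nuM :=
  ⟨by simp [nuM, Real.volume_Icc]⟩

noncomputable def piM (ι : Type) [Fintype ι] : Measure (ι → ℝ) :=
  Measure.pi fun _ => nuM

instance (ι : Type) [Fintype ι] : IsProbabilityMeasure (piM ι) := by
  unfold piM; infer_instance

lemma restrict_eq_piM (ι : Type) [Fintype ι] :
    (volume : Measure (ι → ℝ)).restrict (Set.univ.pi fun _ => Set.Icc (0:ℝ) 1) = piM ι := by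
  refine (Measure.pi_eq fun s hs => ?_).symm
  rw [Measure.restrict_apply (MeasurableSet.univ_pi hs)]
  rw [← Set.pi_inter_distrib, volume_pi_pi]
  simp [nuM, Measure.restrict_apply (hs _)]

lemma homDensity_eq_piM {V : Type} [Fintype V] (H : OrientedGraph V) (U : ℝ → ℝ → ℝ) :
    homDensity H U = ∫ x, (∏ e ∈ H.edges, U (x e.1) (x e.2)) ∂ piM V := by
  rw [homDensity, ← restrict_eq_piM]

lemma ae_mem_Icc (ι : Type) [Fintype ι] :
    ∀ᵐ x ∂ piM ι, ∀ i, x i ∈ Set.Icc (0:ℝ) 1 := by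
  rw [← restrict_eq_piM]
  filter_upwards [ae_restrict_mem (MeasurableSet.univ_pi fun _ => measurableSet_Icc)] with x hx
  exact fun i => hx i (Set.mem_univ i)

lemma squareMeasure_eq : squareMeasure = nuM.prod nuM := by
  rw [squareMeasure, nuM, Measure.prod_restrict, ← Measure.volume_eq_prod]

lemma measurable_prodEdges {V : Type} [Fintype V] {U : ℝ → ℝ → ℝ}
    (hU : Measurable (Function.uncurry U)) (F : Finset (V × V)) :
    Measurable fun x : V → ℝ => ∏ e ∈ F, U (x e.1) (x e.2) :=
  Finset.measurable_prod _ fun e _ => by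
    have h : Measurable fun x : V → ℝ => (x e.1, x e.2) :=
      (measurable_pi_apply _).prodMk (measurable_pi_apply _)
    exact hU.comp h

lemma integrable_of_forall_bound {ι : Type} [Fintype ι] {f : (ι → ℝ) → ℝ}
    (hf : Measurable f) {Cb : ℝ}
    (hb : ∀ x : ι → ℝ, (∀ i, x i ∈ Set.Icc (0:ℝ) 1) → |f x| ≤ Cb) :
    Integrable f (piM ι) := by
  refine ⟨hf.aestronglyMeasurable, HasFiniteIntegral.of_bounded (C := Cb) ?_⟩
  filter_upwards [ae_mem_Icc ι] with x hx
  simpa [Real.norm_eq_abs] using hb x hx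

lemma map_pair {ι : Type} [Fintype ι] {u v : ι} (huv : u ≠ v) :
    (piM ι).map (fun x => (x u, x v)) = nuM.prod nuM := by
  classical
  have hmeas : Measurable fun x : ι → ℝ => (x u, x v) :=
    (measurable_pi_apply u).prodMk (measurable_pi_apply v)
  refine (Measure.prod_eq fun s t hs ht => ?_).symm
  rw [Measure.map_apply hmeas (hs.prod ht)]
  have hpre : (fun x : ι → ℝ => (x u, x v)) ⁻¹' (s ×ˢ t)
      = Set.univ.pi (fun i => if i = u then s else if i = v then t else Set.univ) := by
    ext x
    simp only [Set.mem_preimage, Set.mem_prod, Set.mem_pi, Set.mem_univ, true_implies]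
    constructor
    · rintro ⟨hxs, hxt⟩ i
      by_cases hiu : i = u
      · subst hiu; simp [hxs]
      · by_cases hiv : i = v
        · subst hiv; simp [hiu, hxt]
        · simp [hiu, hiv]
    · intro h
      have h1 := h u
      have h2 := h v
      rw [if_pos rfl] at h1
      rw [if_neg (Ne.symm huv), if_pos rfl] at h2
      exact ⟨h1, h2⟩
  rw [hpre]
  unfold piM
  rw [Measure.pi_pi]
  have : ∀ i, nuM (if i = u then s else if i = v then t else Set.univ)
      = (if i = u then nuM s else 1) * (if i = v then nuM t else 1) := by
    intro i
    by_cases hiu : i = u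
    · subst hiu
      rw [if_pos rfl, if_pos rfl, if_neg huv, mul_one]
    · by_cases hiv : i = v
      · subst hiv
        rw [if_neg hiu, if_pos rfl, if_pos rfl, if_neg hiu, one_mul]
      · rw [if_neg hiu, if_neg hiv, if_neg hiu, if_neg hiv, mul_one]
        exact measure_univ
  rw [Finset.prod_congr rfl fun i _ => this i, Finset.prod_mul_distrib,
    Finset.prod_ite_eq', Finset.prod_ite_eq']
  simp

lemma ae_pair {ι : Type} [Fintype ι] {u v : ι} (huv : u ≠ v) {P : ℝ → ℝ → Prop}
    (h : ∀ᵐ p ∂ nuM.prod nuM, P p.1 p.2) :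
    ∀ᵐ x ∂ piM ι, P (x u) (x v) := by
  have hmeas : Measurable fun x : ι → ℝ => (x u, x v) :=
    (measurable_pi_apply u).prodMk (measurable_pi_apply v)
  rw [ae_iff] at h ⊢
  obtain ⟨N, hsub, hNm, hN0⟩ := exists_measurable_superset_of_null h
  refine measure_mono_null (fun x hx => ?_) (?_ : (piM ι) ((fun x : ι → ℝ => (x u, x v)) ⁻¹' N) = 0)
  · exact hsub hx
  · rw [← Measure.map_apply hmeas hNm, map_pair huv, hN0]

lemma homDensity_congr_ae {V : Type} [Fintype V] (H : OrientedGraph V) {K₁ K₂ : ℝ → ℝ → ℝ}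
    (h : ∀ᵐ p ∂ nuM.prod nuM, K₁ p.1 p.2 = K₂ p.1 p.2) :
    homDensity H K₁ = homDensity H K₂ := by
  rw [homDensity_eq_piM, homDensity_eq_piM]
  refine integral_congr_ae ?_
  have hall : ∀ᵐ x ∂ piM V, ∀ e ∈ (H.edges : Set (V × V)),
      K₁ (x e.1) (x e.2) = K₂ (x e.1) (x e.2) :=
    (MeasureTheory.ae_ball_iff H.edges.countable_toSet).2
      (fun e he => ae_pair (P := fun a b => K₁ a b = K₂ a b) (H.irrefl e (Finset.mem_coe.mp he)) h)
  filter_upwards [hall] with x hx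
  exact Finset.prod_congr rfl (fun e he => hx e (Finset.mem_coe.mpr he))

lemma homDensity_const_half {V : Type} [Fintype V] (H : OrientedGraph V) :
    homDensity H (fun _ _ => (1/2 : ℝ)) = (1/2 : ℝ) ^ H.edges.card := by
  rw [homDensity_eq_piM]
  simp [Finset.prod_const, measure_univ]

end QRF
namespace QRF

open Set MeasureTheory

noncomputable def permEquivM {ι : Type} (e : Equiv.Perm ι) : (ι → ℝ) ≃ᵐ (ι → ℝ) where
  toFun := fun x i => x (e i)
  invFun := fun x i => x (e.symm i)
  left_inv := fun x => funext fun i => by simp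
  right_inv := fun x => funext fun i => by simp
  measurable_toFun := measurable_pi_lambda _ fun i => measurable_pi_apply _
  measurable_invFun := measurable_pi_lambda _ fun i => measurable_pi_apply _

lemma measurePreserving_perm {ι : Type} [Fintype ι] (e : Equiv.Perm ι) :
    MeasurePreserving (permEquivM e) (piM ι) (piM ι) := by
  constructor
  · exact (permEquivM e).measurable
  · refine (Measure.pi_eq fun s hs => ?_).symm
    rw [MeasurableEquiv.map_apply]
    have hpre : (permEquivM e) ⁻¹' (Set.univ.pi s) = Set.univ.pi fun j => s (e.symm j) := by
      ext x
      simp only [Set.mem_preimage, Set.mem_pi, Set.mem_univ, true_implies, permEquivM,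
        MeasurableEquiv.coe_mk, Equiv.coe_fn_mk]
      constructor
      · intro h j
        have := h (e.symm j)
        rwa [Equiv.apply_symm_apply] at this
      · intro h i
        have := h (e i)
        rwa [Equiv.symm_apply_apply] at this
    rw [hpre]
    unfold piM
    rw [Measure.pi_pi]
    exact Equiv.prod_comp e.symm fun i => nuM (s i)

lemma integral_comp_perm {ι : Type} [Fintype ι] (e : Equiv.Perm ι) (f : (ι → ℝ) → ℝ) :
    ∫ x, f (fun i => x (e i)) ∂ piM ι = ∫ x, f x ∂ piM ι :=
  (measurePreserving_perm e).integral_comp' (f := permEquivM e) f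

lemma abs_prod_le {V : Type} [Fintype V] {U : ℝ → ℝ → ℝ} {M : ℝ}
    (hb : ∀ x ∈ Set.Icc (0:ℝ) 1, ∀ y ∈ Set.Icc (0:ℝ) 1, |U x y| ≤ M)
    (F : Finset (V × V)) (x : V → ℝ) (hx : ∀ i, x i ∈ Set.Icc (0:ℝ) 1) :
    |∏ e ∈ F, U (x e.1) (x e.2)| ≤ M ^ F.card := by
  rw [Finset.abs_prod, ← Finset.prod_const]
  exact Finset.prod_le_prod (fun e _ => abs_nonneg _)
    (fun e _ => hb _ (hx _) _ (hx _))

/-- Expansion of the homomorphism density of a kernel `A + θ B` as a polynomial in `θ`. -/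
lemma homDensity_expansion {V : Type} [Fintype V] [DecidableEq V] (H : OrientedGraph V) {A B : ℝ → ℝ → ℝ}
    (hA : Measurable (Function.uncurry A)) (hB : Measurable (Function.uncurry B))
    {MA MB : ℝ}
    (hbA : ∀ x ∈ Set.Icc (0:ℝ) 1, ∀ y ∈ Set.Icc (0:ℝ) 1, |A x y| ≤ MA)
    (hbB : ∀ x ∈ Set.Icc (0:ℝ) 1, ∀ y ∈ Set.Icc (0:ℝ) 1, |B x y| ≤ MB)
    (θ : ℝ) :
    homDensity H (fun x y => A x y + θ * B x y)
      = ∑ F ∈ H.edges.powerset, θ ^ F.card *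
          ∫ x, (∏ e ∈ F, B (x e.1) (x e.2)) * (∏ e ∈ H.edges \ F, A (x e.1) (x e.2)) ∂ piM V := by
  classical
  rw [homDensity_eq_piM]
  have hpt : ∀ x : V → ℝ,
      (∏ e ∈ H.edges, (A (x e.1) (x e.2) + θ * B (x e.1) (x e.2)))
        = ∑ F ∈ H.edges.powerset, θ ^ F.card *
            ((∏ e ∈ F, B (x e.1) (x e.2)) * (∏ e ∈ H.edges \ F, A (x e.1) (x e.2))) := by
    intro x
    have := Finset.prod_add (fun e : V × V => θ * B (x e.1) (x e.2))
      (fun e : V × V => A (x e.1) (x e.2)) H.edges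
    simp only [add_comm] at this ⊢
    rw [this]
    refine Finset.sum_congr rfl fun F _ => ?_
    rw [Finset.prod_mul_distrib, Finset.prod_const]
    ring
  have hint : ∀ F ∈ H.edges.powerset, Integrable
      (fun x : V → ℝ => θ ^ F.card *
        ((∏ e ∈ F, B (x e.1) (x e.2)) * (∏ e ∈ H.edges \ F, A (x e.1) (x e.2)))) (piM V) := by
    intro F _
    refine Integrable.const_mul ?_ _
    refine integrable_of_forall_bound (((measurable_prodEdges hB F).mul
      (measurable_prodEdges hA _))) (Cb := MB ^ F.card * MA ^ (H.edges \ F).card) ?_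
    intro x hx
    rw [abs_mul]
    have h1 := abs_prod_le hbB F x hx
    have h2 := abs_prod_le hbA (H.edges \ F) x hx
    exact mul_le_mul h1 h2 (abs_nonneg _) ((abs_nonneg _).trans h1)
  calc ∫ x, (∏ e ∈ H.edges, ((fun x y => A x y + θ * B x y) (x e.1) (x e.2))) ∂ piM V
      = ∫ x, (∑ F ∈ H.edges.powerset, θ ^ F.card *
          ((∏ e ∈ F, B (x e.1) (x e.2)) * (∏ e ∈ H.edges \ F, A (x e.1) (x e.2)))) ∂ piM V := by
        refine integral_congr_ae (Filter.Eventually.of_forall fun x => ?_)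
        exact hpt x
    _ = ∑ F ∈ H.edges.powerset, ∫ x, θ ^ F.card *
          ((∏ e ∈ F, B (x e.1) (x e.2)) * (∏ e ∈ H.edges \ F, A (x e.1) (x e.2))) ∂ piM V :=
        integral_finset_sum _ hint
    _ = ∑ F ∈ H.edges.powerset, θ ^ F.card *
          ∫ x, (∏ e ∈ F, B (x e.1) (x e.2)) * (∏ e ∈ H.edges \ F, A (x e.1) (x e.2)) ∂ piM V := by
        refine Finset.sum_congr rfl fun F _ => ?_
        rw [integral_const_mul]

end QRF
namespace QRF

open Set MeasureTheory

/-- Any finite set of naturals of odd cardinality contains a maximal run of odd length. -/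
lemma exists_odd_run : ∀ (N : ℕ) (T : Finset ℕ), T.card ≤ N → Odd T.card →
    ∃ a b : ℕ, a ≤ b ∧ (∀ i, a ≤ i → i ≤ b → i ∈ T) ∧ (a = 0 ∨ a - 1 ∉ T) ∧
      (b + 1 ∉ T) ∧ Odd (b + 1 - a) := by
  intro N
  induction N with
  | zero =>
    intro T hc hodd
    interval_cases h : T.card
    · exact absurd hodd (by simp)
  | succ N ih =>
    intro T hcard hodd
    have hne : T.Nonempty := by
      rw [← Finset.card_pos]
      rcases hodd with ⟨k, hk⟩; omega
    set a := T.min' hne with ha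
    have haT : a ∈ T := T.min'_mem hne
    have hPex : ∃ n, a + n ∉ T := by
      refine ⟨T.max' hne + 1 - a, fun hmem => ?_⟩
      have h1 := T.le_max' _ hmem
      have h2 := T.le_max' _ haT
      omega
    have hm0 : 0 < Nat.find hPex := by
      rcases Nat.eq_zero_or_pos (Nat.find hPex) with h | h
      · exact absurd (by simpa [h] using Nat.find_spec hPex) (by simp [haT])
      · exact h
    set m := Nat.find hPex with hm
    have hrun : ∀ i, a ≤ i → i ≤ a + m - 1 → i ∈ T := by
      intro i h1 h2
      have hlt : i - a < m := by omega
      have := Nat.find_min hPex hlt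
      rw [not_not] at this
      have heq : a + (i - a) = i := by omega
      rwa [heq] at this
    have hb1 : a + m ∉ T := Nat.find_spec hPex
    have hleft : a = 0 ∨ a - 1 ∉ T := by
      rcases Nat.eq_zero_or_pos a with h | h
      · exact Or.inl h
      · refine Or.inr fun hmem => ?_
        have := T.min'_le _ hmem
        omega
    by_cases hmodd : Odd m
    · exact ⟨a, a + m - 1, by omega, hrun, hleft, by
        have : a + m - 1 + 1 = a + m := by omega
        rw [this]; exact hb1, by
        have : a + m - 1 + 1 - a = m := by omega
        rw [this]; exact hmodd⟩
    · -- even run at the start: remove it and recurse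
      have hIccsub : Finset.Icc a (a + m - 1) ⊆ T := by
        intro i hi
        rw [Finset.mem_Icc] at hi
        exact hrun i hi.1 hi.2
      set T' := T \ Finset.Icc a (a + m - 1) with hT'
      have hIcccard : (Finset.Icc a (a + m - 1)).card = m := by
        rw [Nat.card_Icc]; omega
      have hmle : m ≤ T.card := by
        have := Finset.card_le_card hIccsub
        omega
      have hcard' : T'.card = T.card - m := by
        rw [hT', Finset.card_sdiff_of_subset hIccsub, hIcccard]
      have hT'odd : Odd T'.card := by
        rcases hodd with ⟨k, hk⟩
        rcases Nat.not_odd_iff_even.mp hmodd with ⟨j, hj⟩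
        rw [hcard']; exact ⟨k - j, by omega⟩
      have hT'le : T'.card ≤ N := by omega
      have hT'big : ∀ x ∈ T', a + m + 1 ≤ x := by
        intro x hx
        rw [hT', Finset.mem_sdiff, Finset.mem_Icc] at hx
        have hge := T.min'_le _ hx.1
        have hxT := hx.1
        have : x ≠ a + m := fun h => hb1 (h ▸ hxT)
        omega
      obtain ⟨a', b', hab', hrun', hleft', hright', hodd'⟩ := ih T' hT'le hT'odd
      have ha'T' : a' ∈ T' := hrun' a' le_rfl hab'
      have ha'big : a + m + 1 ≤ a' := hT'big a' ha'T'
      refine ⟨a', b', hab', ?_, ?_, ?_, hodd'⟩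
      · intro i h1 h2
        exact (Finset.sdiff_subset) (hrun' i h1 h2)
      · refine Or.inr fun hmem => ?_
        rcases hleft' with h | h
        · omega
        · -- a' - 1 ∉ T'; a' - 1 ≥ a + m > a + m - 1 so not in Icc either
          rcases Nat.eq_or_lt_of_le (show a + m ≤ a' - 1 by omega) with heq | hlt
          · exact hb1 (heq ▸ hmem)
          · refine h ?_
            rw [hT', Finset.mem_sdiff, Finset.mem_Icc]
            exact ⟨hmem, by omega⟩
      · intro hmem
        refine hright' ?_
        rw [hT', Finset.mem_sdiff, Finset.mem_Icc]
        exact ⟨hmem, by omega⟩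

noncomputable def Jcan (ℓ : ℕ) [NeZero ℓ] (U : ℝ → ℝ → ℝ) (S : Finset (Fin ℓ)) : ℝ :=
  ∫ x, ∏ i ∈ S, U (x i) (x (i + 1)) ∂ piM (Fin ℓ)

lemma Jcan_rot {ℓ : ℕ} [NeZero ℓ] (U : ℝ → ℝ → ℝ) (S : Finset (Fin ℓ)) (r : Fin ℓ) :
    Jcan ℓ U (S.image (· + r)) = Jcan ℓ U S := by
  classical
  have key := integral_comp_perm (Equiv.addRight r)
    (fun x : Fin ℓ → ℝ => ∏ i ∈ S, U (x i) (x (i + 1)))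
  rw [Jcan, Jcan, ← key]
  refine integral_congr_ae (Filter.Eventually.of_forall fun x => ?_)
  dsimp only
  rw [Finset.prod_image (fun i _ j _ h => add_right_cancel h)]
  refine Finset.prod_congr rfl fun i _ => ?_
  have h2 : i + r + 1 = i + 1 + r := by abel
  rw [Equiv.coe_addRight, h2]

lemma Jcan_univ_zero {ℓ : ℕ} [NeZero ℓ] {U : ℝ → ℝ → ℝ}
    (hanti : ∀ x ∈ Set.Icc (0:ℝ) 1, ∀ y ∈ Set.Icc (0:ℝ) 1, U x y = - U y x)
    (hodd : Odd ℓ) : Jcan ℓ U (Finset.univ) = 0 := by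
  classical
  have key := integral_comp_perm (Equiv.neg (Fin ℓ))
    (fun x : Fin ℓ → ℝ => ∏ i ∈ Finset.univ, U (x i) (x (i + 1)))
  have hmain : Jcan ℓ U Finset.univ = - Jcan ℓ U Finset.univ := by
    calc Jcan ℓ U Finset.univ
        = ∫ x, ∏ i ∈ Finset.univ, U (x (-i)) (x (-(i + 1))) ∂ piM (Fin ℓ) := by
          rw [Jcan, ← key]; rfl
      _ = ∫ x, - ∏ i ∈ Finset.univ, U (x i) (x (i + 1)) ∂ piM (Fin ℓ) := by
          refine integral_congr_ae ?_
          filter_upwards [ae_mem_Icc (Fin ℓ)] with x hx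
          have hterm : ∀ i : Fin ℓ,
              U (x (-i)) (x (-(i + 1))) = (-1) * U (x (-(i+1))) (x ((-(i+1)) + 1)) := by
            intro i
            have h1 : (-(i+1)) + 1 = -i := by abel
            rw [h1, hanti _ (hx _) _ (hx _)]
            ring
          rw [Finset.prod_congr rfl fun i _ => hterm i, Finset.prod_mul_distrib,
            Finset.prod_const]
          have hre : ∏ i ∈ Finset.univ, U (x (-(i+1))) (x ((-(i+1)) + 1))
              = ∏ i ∈ Finset.univ, U (x i) (x (i + 1)) := by
            exact Equiv.prod_comp ((Equiv.addRight (1 : Fin ℓ)).trans (Equiv.neg (Fin ℓ)))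
              (fun j => U (x j) (x (j + 1)))
          rw [hre, Finset.card_univ, Fintype.card_fin, hodd.neg_one_pow, neg_one_mul]
      _ = - Jcan ℓ U Finset.univ := by rw [integral_neg, Jcan]
  linarith

end QRF
namespace QRF

open Set MeasureTheory

lemma Jcan_window_zero {ℓ : ℕ} [NeZero ℓ] {U : ℝ → ℝ → ℝ}
    (hanti : ∀ x ∈ Set.Icc (0:ℝ) 1, ∀ y ∈ Set.Icc (0:ℝ) 1, U x y = - U y x)
    {S : Finset (Fin ℓ)} {a b : ℕ}
    (hab : a ≤ b) (hb : b + 1 < ℓ)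
    (hrun : ∀ i : Fin ℓ, a ≤ i.val → i.val ≤ b → i ∈ S)
    (hgl : ∀ i : Fin ℓ, (i.val + 1) % ℓ = a → i ∉ S)
    (hgr : ∀ i : Fin ℓ, i.val = b + 1 → i ∉ S)
    (hodd : Odd (b + 1 - a)) : Jcan ℓ U S = 0 := by
  classical
  have hvadd : ∀ i : Fin ℓ, (i + 1).val = (i.val + 1) % ℓ := by
    intro i
    rw [Fin.add_def, Fin.val_one']
    exact Nat.add_mod_mod _ _ _
  set σ : Fin ℓ → Fin ℓ :=
    fun v => if h : a ≤ v.val ∧ v.val ≤ b + 1 then ⟨a + b + 1 - v.val, by omega⟩ else v with hσ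
  have hσval_in : ∀ v : Fin ℓ, a ≤ v.val → v.val ≤ b + 1 → (σ v).val = a + b + 1 - v.val := by
    intro v h1 h2
    rw [hσ]; simp only; rw [dif_pos ⟨h1, h2⟩]
  have hσ_out : ∀ v : Fin ℓ, ¬(a ≤ v.val ∧ v.val ≤ b + 1) → σ v = v := by
    intro v h
    rw [hσ]; simp only; rw [dif_neg h]
  have hinv : Function.Involutive σ := by
    intro v
    by_cases h : a ≤ v.val ∧ v.val ≤ b + 1
    · have h1 : (σ v).val = a + b + 1 - v.val := hσval_in v h.1 h.2
      have h2 : a ≤ (σ v).val ∧ (σ v).val ≤ b + 1 := by omega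
      apply Fin.ext
      rw [hσval_in _ h2.1 h2.2, h1]
      omega
    · rw [hσ_out v h, hσ_out v h]
  set e := hinv.toPerm σ with he
  have key := integral_comp_perm e (fun x : Fin ℓ → ℝ => ∏ i ∈ S, U (x i) (x (i + 1)))
  -- fixed points off the run
  have hfix : ∀ i : Fin ℓ, i ∈ S → ¬(a ≤ i.val ∧ i.val ≤ b) →
      σ i = i ∧ σ (i + 1) = i + 1 := by
    intro i hiS hout
    constructor
    · refine hσ_out i fun hin => ?_
      have : i.val = b + 1 := by omega
      exact hgr i this hiS
    · refine hσ_out (i + 1) fun hin => ?_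
      have hval := hvadd i
      rcases Nat.lt_or_ge (i.val + 1) ℓ with hc | hc
      · rw [Nat.mod_eq_of_lt hc] at hval
        rw [hval] at hin
        rcases Nat.eq_or_lt_of_le hin.1 with heq | hlt
        · exact hgl i (by rw [Nat.mod_eq_of_lt hc, heq]) hiS
        · exact hout ⟨by omega, by omega⟩
      · have hiv : i.val + 1 = ℓ := by
          have := i.isLt; omega
        rw [hiv, Nat.mod_self] at hval
        rw [hval] at hin
        have ha0 : a = 0 := by omega
        exact hgl i (by rw [hiv, Nat.mod_self, ha0]) hiS
  set p : Fin ℓ → Prop := fun i => a ≤ i.val ∧ i.val ≤ b with hp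
  set R := S.filter p with hR
  have hmemR : ∀ i ∈ R, a ≤ i.val ∧ i.val ≤ b := by
    intro i hi
    rw [hR, Finset.mem_filter] at hi
    exact hi.2
  set ρ : Fin ℓ → Fin ℓ := fun i => σ (i + 1) with hρ
  have hρval : ∀ i : Fin ℓ, a ≤ i.val → i.val ≤ b → (ρ i).val = a + b - i.val := by
    intro i h1 h2
    have hi1 : (i + 1).val = i.val + 1 := by
      rw [hvadd i, Nat.mod_eq_of_lt (by omega)]
    rw [hρ]; simp only
    rw [show (σ (i+1)).val = a + b + 1 - (i+1).val from
      hσval_in _ (by omega) (by omega), hi1]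
    omega
  have hρR : ∀ i ∈ R, ρ i ∈ R := by
    intro i hi
    obtain ⟨h1, h2⟩ := hmemR i hi
    have hv := hρval i h1 h2
    rw [hR, Finset.mem_filter]
    refine ⟨hrun _ (by omega) (by omega), by rw [hp]; exact ⟨by omega, by omega⟩⟩
  have hρρ : ∀ i ∈ R, ρ (ρ i) = i := by
    intro i hi
    obtain ⟨h1, h2⟩ := hmemR i hi
    have hv := hρval i h1 h2
    apply Fin.ext
    rw [hρval _ (by omega) (by omega), hv]
    omega
  have hcardR : R.card = b + 1 - a := by
    rw [← Nat.card_Icc a b]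
    refine Finset.card_bij' (fun v _ => v.val) (fun n hn => ⟨n, ?_⟩) ?_ ?_ ?_ ?_
    · rw [Finset.mem_Icc] at hn; omega
    · intro v hv
      obtain ⟨h1, h2⟩ := hmemR v hv
      rw [Finset.mem_Icc]; exact ⟨h1, h2⟩
    · intro n hn
      rw [Finset.mem_Icc] at hn
      rw [hR, Finset.mem_filter]
      exact ⟨hrun _ (by simp; omega) (by simp; omega), by rw [hp]; constructor <;> simp <;> omega⟩
    · intro v _; exact Fin.ext rfl
    · intro n _; rfl
  -- main pointwise identity
  have hmain : ∀ᵐ x ∂ piM (Fin ℓ),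
      (∏ i ∈ S, U (x (σ i)) (x (σ (i + 1))))
        = - ∏ i ∈ S, U (x i) (x (i + 1)) := by
    filter_upwards [ae_mem_Icc (Fin ℓ)] with x hx
    rw [← Finset.prod_filter_mul_prod_filter_not S p
      (fun i => U (x (σ i)) (x (σ (i + 1)))),
      ← Finset.prod_filter_mul_prod_filter_not S p (fun i => U (x i) (x (i + 1)))]
    have hnot : ∏ i ∈ S.filter (fun i => ¬ p i), U (x (σ i)) (x (σ (i + 1)))
        = ∏ i ∈ S.filter (fun i => ¬ p i), U (x i) (x (i + 1)) := by
      refine Finset.prod_congr rfl fun i hi => ?_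
      rw [Finset.mem_filter] at hi
      obtain ⟨hfix1, hfix2⟩ := hfix i hi.1 hi.2
      rw [hfix1, hfix2]
    have hterm : ∀ i ∈ R, U (x (σ i)) (x (σ (i + 1)))
        = (-1) * U (x (ρ i)) (x (ρ i + 1)) := by
      intro i hi
      obtain ⟨h1, h2⟩ := hmemR i hi
      have hv := hρval i h1 h2
      have hρ1 : ρ i + 1 = σ i := by
        apply Fin.ext
        rw [hvadd (ρ i), hv, Nat.mod_eq_of_lt (by omega), hσval_in i h1 (by omega)]
        omega
      have hσi1 : σ (i + 1) = ρ i := rfl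
      rw [hσi1, hρ1, hanti _ (hx _) _ (hx _)]
      ring
    have hrunprod : ∏ i ∈ R, U (x (σ i)) (x (σ (i + 1)))
        = - ∏ i ∈ R, U (x i) (x (i + 1)) := by
      rw [Finset.prod_congr rfl hterm, Finset.prod_mul_distrib, Finset.prod_const, hcardR,
        hodd.neg_one_pow]
      have hre : ∏ i ∈ R, U (x (ρ i)) (x (ρ i + 1)) = ∏ i ∈ R, U (x i) (x (i + 1)) := by
        refine Finset.prod_nbij' ρ ρ hρR hρR hρρ hρρ ?_
        intro i hi
        rfl
      rw [hre]
      ring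
    have hfilter : Finset.filter (fun x => p x) S = R := rfl
    rw [hfilter, hnot, hrunprod]
    ring
  have step1 : Jcan ℓ U S = ∫ x, ∏ i ∈ S, U (x (σ i)) (x (σ (i + 1))) ∂ piM (Fin ℓ) := by
    rw [Jcan, ← key]
    refine integral_congr_ae (Filter.Eventually.of_forall fun x => ?_)
    dsimp only
    rfl
  have : Jcan ℓ U S = - Jcan ℓ U S := by
    conv_lhs => rw [step1]
    rw [integral_congr_ae hmain, integral_neg]
    rfl
  linarith

end QRF
namespace QRF

open Set MeasureTheory

lemma Jcan_eq_zero {ℓ : ℕ} [NeZero ℓ] (hℓ : 3 ≤ ℓ) {U : ℝ → ℝ → ℝ}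
    (hanti : ∀ x ∈ Set.Icc (0:ℝ) 1, ∀ y ∈ Set.Icc (0:ℝ) 1, U x y = - U y x)
    {S : Finset (Fin ℓ)} (hS : Odd S.card) : Jcan ℓ U S = 0 := by
  classical
  by_cases huniv : S = Finset.univ
  · subst huniv
    refine Jcan_univ_zero hanti ?_
    rwa [Finset.card_univ, Fintype.card_fin] at hS
  · obtain ⟨g, hg⟩ : ∃ g : Fin ℓ, g ∉ S := by
      by_contra h
      push_neg at h
      exact huniv (Finset.eq_univ_iff_forall.mpr h)
    set last : Fin ℓ := ⟨ℓ - 1, by omega⟩ with hlastdef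
    set r : Fin ℓ := last - g with hr
    set S' := S.image (· + r) with hS'
    have hJ : Jcan ℓ U S = Jcan ℓ U S' := (Jcan_rot U S r).symm
    have hglast : g + r = last := by
      rw [hr]
      exact add_sub_cancel _ _
    have hlast_not : last ∉ S' := by
      intro hmem
      rw [hS', Finset.mem_image] at hmem
      obtain ⟨s, hs, hsr⟩ := hmem
      have : s = g := by
        have := hsr.trans hglast.symm
        exact add_right_cancel this
      exact hg (this ▸ hs)
    have hcard' : S'.card = S.card := by
      rw [hS']
      exact Finset.card_image_of_injective _ (add_left_injective r)
    have hbound : ∀ i ∈ S', i.val ≤ ℓ - 2 := by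
      intro i hi
      have h1 : i ≠ last := fun h => hlast_not (h ▸ hi)
      have h2 : i.val ≠ ℓ - 1 := fun h => h1 (Fin.ext (by rw [h]))
      have := i.isLt
      omega
    set T := S'.image Fin.val with hT
    have hTcard : T.card = S'.card := Finset.card_image_of_injective _ Fin.val_injective
    have hTodd : Odd T.card := by rw [hTcard, hcard']; exact hS
    obtain ⟨a, b, hab, hrunT, hleftT, hrightT, hoddT⟩ :=
      exists_odd_run T.card T le_rfl hTodd
    have hmemT : ∀ n, n ∈ T ↔ ∃ i ∈ S', i.val = n := by
      intro n
      rw [hT, Finset.mem_image]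
    have hbT : b ∈ T := hrunT b hab le_rfl
    have hble : b ≤ ℓ - 2 := by
      obtain ⟨i, hi, hiv⟩ := (hmemT b).mp hbT
      exact hiv ▸ hbound i hi
    have hb1 : b + 1 < ℓ := by omega
    have halt : a < ℓ := by omega
    rw [hJ]
    refine Jcan_window_zero hanti hab hb1 ?_ ?_ ?_ hoddT
    · intro i h1 h2
      have : i.val ∈ T := hrunT i.val h1 h2
      obtain ⟨j, hj, hjv⟩ := (hmemT _).mp this
      have : j = i := Fin.ext hjv
      exact this ▸ hj
    · intro i hiv hiS
      have hi1 : i.val + 1 ≤ ℓ - 1 := by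
        have := hbound i hiS; omega
      rw [Nat.mod_eq_of_lt (by omega)] at hiv
      rcases Nat.eq_zero_or_pos a with ha0 | hapos
      · omega
      · have : a - 1 ∈ T := (hmemT _).mpr ⟨i, hiS, by omega⟩
        rcases hleftT with h | h
        · omega
        · exact h this
    · intro i hiv hiS
      exact hrightT ((hmemT _).mpr ⟨i, hiS, hiv⟩)

end QRF
namespace QRF

open Set MeasureTheory
open scoped Classical

variable {ℓ : ℕ} [NeZero ℓ]

/-- The lower endpoint of an edge of the cycle. -/
noncomputable def lo (e : Fin ℓ × Fin ℓ) : Fin ℓ := if e.2 = e.1 + 1 then e.1 else e.2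

/-- The sign of an edge of the cycle. -/
noncomputable def sgn (e : Fin ℓ × Fin ℓ) : ℝ := if e.2 = e.1 + 1 then 1 else -1

lemma edge_shape {C : OrientedGraph (Fin ℓ)} (hC : IsCycleOrientation C)
    (hℓ : 3 ≤ ℓ) {e : Fin ℓ × Fin ℓ} (he : e ∈ C.edges) :
    (e.2 = e.1 + 1 ∧ lo e = e.1) ∨ (¬ (e.2 = e.1 + 1) ∧ e.1 = e.2 + 1 ∧ lo e = e.2) := by
  have hvadd : ∀ i : Fin ℓ, (i + 1).val = (i.val + 1) % ℓ := by
    intro i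
    rw [Fin.add_def, Fin.val_one']
    exact Nat.add_mod_mod _ _ _
  rcases hC.1 e he with h | h
  · have h2 : e.2 = e.1 + 1 := Fin.ext (by rw [hvadd, h])
    exact Or.inl ⟨h2, by rw [lo, if_pos h2]⟩
  · have h2 : e.1 = e.2 + 1 := Fin.ext (by rw [hvadd, h])
    by_cases hf : e.2 = e.1 + 1
    · -- both directions: then e.1 = e.1 + 1 + 1, so 2 ≡ 0 mod ℓ, contradiction with ℓ ≥ 3
      exfalso
      have : e.1 = e.1 + 1 + 1 := by rw [← hf]; exact h2
      have hval := congrArg Fin.val this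
      rw [hvadd, hvadd] at hval
      have h1 := e.1.isLt
      rcases Nat.lt_or_ge (e.1.val + 1) ℓ with hc | hc
      · rw [Nat.mod_eq_of_lt hc] at hval
        rcases Nat.lt_or_ge (e.1.val + 1 + 1) ℓ with hc2 | hc2
        · rw [Nat.mod_eq_of_lt hc2] at hval; omega
        · have : e.1.val + 1 + 1 = ℓ := by omega
          rw [this, Nat.mod_self] at hval; omega
      · have hv1 : e.1.val + 1 = ℓ := by omega
        rw [hv1, Nat.mod_self] at hval
        rw [Nat.mod_eq_of_lt (by omega)] at hval
        omega
    · exact Or.inr ⟨hf, h2, by rw [lo, if_neg hf]⟩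

lemma lo_injOn {C : OrientedGraph (Fin ℓ)} (hC : IsCycleOrientation C) (hℓ : 3 ≤ ℓ) :
    ∀ e ∈ C.edges, ∀ e' ∈ C.edges, lo e = lo e' → e = e' := by
  intro e he e' he' hlo
  rcases edge_shape hC hℓ he with ⟨hf, hl⟩ | ⟨hnf, hb, hl⟩ <;>
    rcases edge_shape hC hℓ he' with ⟨hf', hl'⟩ | ⟨hnf', hb', hl'⟩
  · -- both forward
    have h1 : e.1 = e'.1 := by rw [← hl, ← hl', hlo]
    exact Prod.ext h1 (by rw [hf, hf', h1])
  · -- e forward, e' backward : (i, i+1) and (i+1, i) both edges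
    exfalso
    have h1 : e.1 = e'.2 := by rw [← hl, ← hl', hlo]
    have hmem : (e.1, e.1 + 1) ∈ C.edges := by
      have : e = (e.1, e.1 + 1) := Prod.ext rfl hf
      exact this ▸ he
    have hmem' : (e.1 + 1, e.1) ∈ C.edges := by
      have : e' = (e'.2 + 1, e'.2) := Prod.ext hb' rfl
      rw [← h1] at this
      exact this ▸ he'
    exact C.antisymm _ _ hmem hmem'
  · -- e backward, e' forward
    exfalso
    have h1 : e.2 = e'.1 := by rw [← hl, ← hl', hlo]
    have hmem : (e.2 + 1, e.2) ∈ C.edges := by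
      have : e = (e.2 + 1, e.2) := Prod.ext hb rfl
      exact this ▸ he
    have hmem' : (e.2, e.2 + 1) ∈ C.edges := by
      have : e' = (e'.1, e'.1 + 1) := Prod.ext rfl hf'
      rw [← h1] at this
      exact this ▸ he'
    exact C.antisymm _ _ hmem' hmem
  · have h1 : e.2 = e'.2 := by rw [← hl, ← hl', hlo]
    exact Prod.ext (by rw [hb, hb', h1]) h1

lemma prod_edges_canonical {C : OrientedGraph (Fin ℓ)} (hC : IsCycleOrientation C)
    (hℓ : 3 ≤ ℓ) {U : ℝ → ℝ → ℝ}
    (hanti : ∀ x ∈ Set.Icc (0:ℝ) 1, ∀ y ∈ Set.Icc (0:ℝ) 1, U x y = - U y x)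
    {F : Finset (Fin ℓ × Fin ℓ)} (hF : F ⊆ C.edges)
    (x : Fin ℓ → ℝ) (hx : ∀ i, x i ∈ Set.Icc (0:ℝ) 1) :
    ∏ e ∈ F, U (x e.1) (x e.2)
      = (∏ e ∈ F, sgn e) * ∏ i ∈ F.image lo, U (x i) (x (i + 1)) := by
  rw [Finset.prod_image (fun e he e' he' h => lo_injOn hC hℓ e (hF he) e' (hF he') h),
    ← Finset.prod_mul_distrib]
  refine Finset.prod_congr rfl fun e he => ?_
  rcases edge_shape hC hℓ (hF he) with ⟨hf, hl⟩ | ⟨hnf, hb, hl⟩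
  · rw [sgn, if_pos hf, hl, ← hf, one_mul]
  · rw [sgn, if_neg hnf, hl, ← hb, hanti _ (hx _) _ (hx _)]
    ring

lemma int_prod_edges_zero {C : OrientedGraph (Fin ℓ)} (hC : IsCycleOrientation C)
    (hℓ : 3 ≤ ℓ) {U : ℝ → ℝ → ℝ}
    (hanti : ∀ x ∈ Set.Icc (0:ℝ) 1, ∀ y ∈ Set.Icc (0:ℝ) 1, U x y = - U y x)
    {F : Finset (Fin ℓ × Fin ℓ)} (hF : F ⊆ C.edges) (hodd : Odd F.card) :
    ∫ x, ∏ e ∈ F, U (x e.1) (x e.2) ∂ piM (Fin ℓ) = 0 := by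
  have hcardim : (F.image lo).card = F.card :=
    Finset.card_image_of_injOn fun e he e' he' h =>
      lo_injOn hC hℓ e (hF he) e' (hF he') h
  calc ∫ x, ∏ e ∈ F, U (x e.1) (x e.2) ∂ piM (Fin ℓ)
      = ∫ x, (∏ e ∈ F, sgn e) * ∏ i ∈ F.image lo, U (x i) (x (i + 1)) ∂ piM (Fin ℓ) := by
        refine integral_congr_ae ?_
        filter_upwards [ae_mem_Icc (Fin ℓ)] with x hx
        exact prod_edges_canonical hC hℓ hanti hF x hx
    _ = (∏ e ∈ F, sgn e) * Jcan ℓ U (F.image lo) := by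
        rw [integral_const_mul, Jcan]
    _ = 0 := by
        rw [Jcan_eq_zero hℓ hanti (hcardim ▸ hodd), mul_zero]

end QRF
/-- if there are tournamentons with density of `C` below and above `2^{-‖C‖}`,
then `C` is not quasirandom-forcing. -/
theorem not_quasirandomForcing_of_lt_gt (ℓ : ℕ) (hℓ : 3 ≤ ℓ)
    (C : OrientedGraph (Fin ℓ)) (hC : IsCycleOrientation C)
    (W₁ W₂ : ℝ → ℝ → ℝ) (h₁ : IsTournamenton W₁) (h₂ : IsTournamenton W₂)
    (hlt : homDensity C W₁ < (1 / 2 : ℝ) ^ C.edges.card)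
    (hgt : (1 / 2 : ℝ) ^ C.edges.card < homDensity C W₂) :
    ∃ W : ℝ → ℝ → ℝ, IsTournamenton W ∧
      ¬ (∀ᵐ p : ℝ × ℝ ∂squareMeasure, W p.1 p.2 = 1 / 2) ∧
      homDensity C W = (1 / 2 : ℝ) ^ C.edges.card := by
  classical
  haveI : NeZero ℓ := ⟨by omega⟩
  obtain ⟨hW₁m, hW₁b, hW₁s⟩ := h₁
  obtain ⟨hW₂m, hW₂b, hW₂s⟩ := h₂
  set B : ℝ → ℝ → ℝ := fun x y => W₂ x y - W₁ x y with hB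
  have hBm : Measurable (Function.uncurry B) := by
    have : Function.uncurry B
        = fun p : ℝ × ℝ => Function.uncurry W₂ p - Function.uncurry W₁ p := rfl
    rw [this]; exact hW₂m.sub hW₁m
  have hBb : ∀ x ∈ Set.Icc (0:ℝ) 1, ∀ y ∈ Set.Icc (0:ℝ) 1, |B x y| ≤ 1 := by
    intro x hx y hy
    obtain ⟨h1, h2⟩ := hW₁b x hx y hy
    obtain ⟨h3, h4⟩ := hW₂b x hx y hy
    rw [hB, abs_le]; constructor <;> simp <;> linarith
  have hBanti : ∀ x ∈ Set.Icc (0:ℝ) 1, ∀ y ∈ Set.Icc (0:ℝ) 1, B x y = - B y x := by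
    intro x hx y hy
    have e1 := hW₁s x hx y hy
    have e2 := hW₂s x hx y hy
    rw [hB]; simp only; linarith
  have hW₁ab : ∀ x ∈ Set.Icc (0:ℝ) 1, ∀ y ∈ Set.Icc (0:ℝ) 1, |W₁ x y| ≤ 1 := by
    intro x hx y hy
    obtain ⟨h1, h2⟩ := hW₁b x hx y hy
    rw [abs_le]; constructor <;> linarith
  set mix : ℝ → ℝ → ℝ → ℝ := fun t x y => W₁ x y + t * B x y with hmix
  have hmixT : ∀ t : ℝ, 0 ≤ t → t ≤ 1 → IsTournamenton (mix t) := by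
    intro t ht0 ht1
    refine ⟨?_, ?_, ?_⟩
    · have : Function.uncurry (mix t) = fun p : ℝ × ℝ =>
        Function.uncurry W₁ p + t * (Function.uncurry W₂ p - Function.uncurry W₁ p) := rfl
      rw [this]
      exact hW₁m.add ((hW₂m.sub hW₁m).const_mul t)
    · intro x hx y hy
      obtain ⟨h1, h2⟩ := hW₁b x hx y hy
      obtain ⟨h3, h4⟩ := hW₂b x hx y hy
      constructor
      · have : mix t x y = (1 - t) * W₁ x y + t * W₂ x y := by rw [hmix, hB]; ring
        rw [this]
        have := mul_nonneg (by linarith : (0:ℝ) ≤ 1 - t) h1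
        have := mul_nonneg ht0 h3
        linarith
      · have : mix t x y = (1 - t) * W₁ x y + t * W₂ x y := by rw [hmix, hB]; ring
        rw [this]
        nlinarith
    · intro x hx y hy
      have e1 := hW₁s x hx y hy
      have e2 := hW₂s x hx y hy
      rw [hmix, hB]; simp only; ring_nf; nlinarith [e1, e2]
  set pfun : ℝ → ℝ := fun t => homDensity C (mix t) with hpfun
  have hprepr : ∀ t : ℝ, pfun t = ∑ F ∈ C.edges.powerset, t ^ F.card *
      (∫ x, (∏ e ∈ F, B (x e.1) (x e.2)) *
        (∏ e ∈ C.edges \ F, W₁ (x e.1) (x e.2)) ∂ QRF.piM (Fin ℓ)) := by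
    intro t
    show homDensity C (mix t) = _
    have h0 : mix t = fun x y => W₁ x y + t * B x y := rfl
    rw [h0]
    exact QRF.homDensity_expansion C hW₁m hBm hW₁ab hBb t
  have hpcont : Continuous pfun := by
    rw [funext hprepr]
    exact continuous_finset_sum _ fun F _ => (continuous_pow _).mul continuous_const
  have hp0 : pfun 0 = homDensity C W₁ := by
    show homDensity C (mix 0) = _
    have : mix 0 = W₁ := by funext x y; rw [hmix]; simp
    rw [this]
  have hp1 : pfun 1 = homDensity C W₂ := by
    show homDensity C (mix 1) = _
    have : mix 1 = W₂ := by funext x y; rw [hmix, hB]; simp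
    rw [this]
  have hIVT : (1/2 : ℝ) ^ C.edges.card ∈ pfun '' Set.Ioo 0 1 := by
    refine intermediate_value_Ioo (by norm_num) hpcont.continuousOn ?_
    rw [hp0, hp1]
    exact ⟨hlt, hgt⟩
  obtain ⟨θ₀, ⟨hθ₀0, hθ₀1⟩, hθ₀⟩ := hIVT
  by_cases hdeg : ∀ᵐ p : ℝ × ℝ ∂squareMeasure, mix θ₀ p.1 p.2 = 1/2
  case neg =>
    exact ⟨mix θ₀, hmixT θ₀ hθ₀0.le hθ₀1.le, hdeg, hθ₀⟩
  case pos =>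
    rw [QRF.squareMeasure_eq] at hdeg
    set D : ℝ → ℝ := fun lam => homDensity C (fun x y => 1/2 + lam * B x y) with hD
    have hDrepr : ∀ lam : ℝ, D lam = ∑ F ∈ C.edges.powerset, lam ^ F.card *
        (∫ x, (∏ e ∈ F, B (x e.1) (x e.2)) *
          (∏ e ∈ C.edges \ F, (1/2 : ℝ)) ∂ QRF.piM (Fin ℓ)) := by
      intro lam
      show homDensity C (fun x y => 1/2 + lam * B x y) = _
      exact QRF.homDensity_expansion (A := fun _ _ => (1/2:ℝ)) C measurable_const hBm
        (MA := 1) (fun x _ y _ => by rw [abs_of_nonneg (by norm_num : (0:ℝ) ≤ 1/2)]; norm_num) hBb lam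
    have hDcont : Continuous D := by
      rw [funext hDrepr]
      exact continuous_finset_sum _ fun F _ => (continuous_pow _).mul continuous_const
    have hDeven : ∀ lam : ℝ, D (-lam) = D lam := by
      intro lam
      rw [hDrepr, hDrepr]
      refine Finset.sum_congr rfl fun F hF => ?_
      rcases Nat.even_or_odd F.card with hev | hodd
      · rw [hev.neg_pow]
      · have hzero : (∫ x, (∏ e ∈ F, B (x e.1) (x e.2)) *
            (∏ e ∈ C.edges \ F, (1/2 : ℝ)) ∂ QRF.piM (Fin ℓ)) = 0 := by
          simp only [Finset.prod_const]
          rw [MeasureTheory.integral_mul_const,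
            QRF.int_prod_edges_zero hC hℓ hBanti (Finset.mem_powerset.mp hF) hodd, zero_mul]
        rw [hzero, mul_zero, mul_zero]
    have hlink : ∀ t : ℝ, homDensity C (mix t) = D (t - θ₀) := by
      intro t
      rw [hD]
      refine QRF.homDensity_congr_ae C ?_
      filter_upwards [hdeg] with q hq
      have : mix t q.1 q.2 = mix θ₀ q.1 q.2 + (t - θ₀) * B q.1 q.2 := by
        rw [hmix]; simp only; ring
      rw [this, hq]
    have hD0 : D (-θ₀) = homDensity C W₁ := by
      rw [← hp0]
      show _ = homDensity C (mix 0)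
      rw [hlink 0, zero_sub]
    have hD1 : D (1-θ₀) = homDensity C W₂ := by
      rw [← hp1]
      show _ = homDensity C (mix 1)
      rw [hlink 1]
    have hDθ₀lt : D θ₀ < (1/2 : ℝ) ^ C.edges.card := by
      have := hDeven θ₀
      rw [hD0] at this
      rw [← this]
      exact hlt
    have hD1gt : (1/2 : ℝ) ^ C.edges.card < D (1-θ₀) := by rw [hD1]; exact hgt
    -- in the degenerate case, if some mix t' with t' ≠ θ₀ has density 2^{-m}, we win
    have hfinish : ∀ t' : ℝ, 0 < t' → t' < 1 → t' ≠ θ₀ →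
        homDensity C (mix t') = (1/2 : ℝ) ^ C.edges.card →
        ∃ W : ℝ → ℝ → ℝ, IsTournamenton W ∧
          ¬ (∀ᵐ p : ℝ × ℝ ∂squareMeasure, W p.1 p.2 = 1 / 2) ∧
          homDensity C W = (1 / 2 : ℝ) ^ C.edges.card := by
      intro t' ht'0 ht'1 ht'ne hdens
      refine ⟨mix t', hmixT t' ht'0.le ht'1.le, ?_, hdens⟩
      intro hae
      rw [QRF.squareMeasure_eq] at hae
      have hW₁half : ∀ᵐ q ∂ (QRF.nuM.prod QRF.nuM), W₁ q.1 q.2 = 1/2 := by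
        filter_upwards [hdeg, hae] with q hq1 hq2
        have e1 : mix t' q.1 q.2 = mix θ₀ q.1 q.2 + (t' - θ₀) * B q.1 q.2 := by
          rw [hmix]; simp only; ring
        rw [hq1, hq2] at e1
        have hBq : B q.1 q.2 = 0 := by
          have hne : t' - θ₀ ≠ 0 := sub_ne_zero.mpr ht'ne
          have : (t' - θ₀) * B q.1 q.2 = 0 := by linarith
          exact (mul_eq_zero.mp this).resolve_left hne
        have e2 : mix θ₀ q.1 q.2 = W₁ q.1 q.2 + θ₀ * B q.1 q.2 := rfl
        rw [hBq, mul_zero, add_zero] at e2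
        rw [← e2, hq1]
      have : homDensity C W₁ = homDensity C (fun _ _ => (1/2 : ℝ)) :=
        QRF.homDensity_congr_ae C hW₁half
      rw [this, QRF.homDensity_const_half] at hlt
      exact lt_irrefl _ hlt
    have hneq : θ₀ ≠ 1 - θ₀ := by
      intro h
      rw [← h] at hD1gt
      linarith
    rcases lt_or_gt_of_ne hneq with hcase | hcase
    · obtain ⟨lam, ⟨hlam1, hlam2⟩, hlamD⟩ :=
        intermediate_value_Ioo hcase.le hDcont.continuousOn ⟨hDθ₀lt, hD1gt⟩
      refine hfinish (θ₀ + lam) (by linarith) (by linarith) (by intro h; nlinarith) ?_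
      rw [hlink, add_sub_cancel_left, hlamD]
    · obtain ⟨lam, ⟨hlam1, hlam2⟩, hlamD⟩ :=
        intermediate_value_Ioo' hcase.le hDcont.continuousOn ⟨hDθ₀lt, hD1gt⟩
      refine hfinish (θ₀ - lam) (by linarith) (by linarith) (by intro h; nlinarith) ?_
      rw [hlink]
      have : θ₀ - lam - θ₀ = -lam := by ring
      rw [this, hDeven, hlamD]
end
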